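/- arXiv:2008.01428 — 5 statements merged into one kernel-verified Lean document; each statement's English description precedes it below -/
import Mathlib

section
/- For any numerical semigroup H one has res(H) ≤ n(H), and equality res(H) = n(H) holds if and only if tr(H) = C_H. -/
namespace NumSgp

/-- A numerical semigroup: an additive submonoid of ℕ with finite complement. -/
def IsNumSgp (H : Set ℕ) : Prop :=
  0 ∈ H ∧ (∀ a ∈ H, ∀ b ∈ H, a + b ∈ H) ∧ Hᶜ.Finite

/-- Membership of an integer in (the image in ℤ of) `H ⊆ ℕ`. -/
def memZ (H : Set ℕ) (z : ℤ) : Prop := ∃ n ∈ H, (n : ℤ) = z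

/-- The Frobenius number: the largest integer not in `H`. -/
noncomputable def frob (H : Set ℕ) : ℤ := sSup {z : ℤ | ¬ memZ H z}

/-- The pseudo-Frobenius numbers of `H`. -/
def pseudoFrob (H : Set ℕ) : Set ℤ :=
  {f : ℤ | ¬ memZ H f ∧ ∀ m ∈ H, m ≠ 0 → memZ H (f + (m : ℤ))}

/-- The canonical ideal `Ω_H = {-f + h : f ∈ PF(H), h ∈ H}`. -/
def canIdeal (H : Set ℕ) : Set ℤ :=
  {z : ℤ | ∃ f ∈ pseudoFrob H, ∃ h ∈ H, z = -f + (h : ℤ)}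

/-- The anti-canonical ideal `Ω_H⁻¹ = {x : x + Ω_H ⊆ H}`. -/
def antiCanIdeal (H : Set ℕ) : Set ℤ :=
  {x : ℤ | ∀ w ∈ canIdeal H, memZ H (x + w)}

/-- The trace of `H`: the sumset `Ω_H + Ω_H⁻¹`. -/
def trace (H : Set ℕ) : Set ℤ :=
  {z : ℤ | ∃ w ∈ canIdeal H, ∃ x ∈ antiCanIdeal H, z = w + x}

/-- The conductor ideal `C_H = {x : x > Fr(H)}` (viewed inside ℤ). -/
noncomputable def condIdeal (H : Set ℕ) : Set ℤ := {z : ℤ | frob H < z}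

/-- The residue of `H`: `|H ∖ tr(H)|`. -/
noncomputable def res (H : Set ℕ) : ℕ :=
  Set.ncard {h : ℕ | h ∈ H ∧ (h : ℤ) ∉ trace H}

/-- The number of gaps `g(H)`. -/
noncomputable def gaps (H : Set ℕ) : ℕ := Set.ncard Hᶜ

/-- The number of non-gaps below the Frobenius number, `n(H)`. -/
noncomputable def nongaps (H : Set ℕ) : ℕ :=
  Set.ncard {x : ℕ | x ∈ H ∧ (x : ℤ) < frob H}

/-- `H` is symmetric if for all `x ∈ ℤ`, `x ∈ H` or `Fr(H) - x ∈ H`. -/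
noncomputable def IsSymmetric (H : Set ℕ) : Prop :=
  ∀ z : ℤ, memZ H z ∨ memZ H (frob H - z)

/-- `H` is nearly Gorenstein if `M = H ∖ {0} ⊆ tr(H)`. -/
def NearlyGorenstein (H : Set ℕ) : Prop :=
  ∀ h ∈ H, h ≠ 0 → (h : ℤ) ∈ trace H

/-- The submonoid of ℕ generated by a set. -/
def genBy (A : Set ℕ) : Set ℕ := (AddSubmonoid.closure A : Set ℕ)

end NumSgp

open NumSgp


section Aux

variable {H : Set ℕ}

lemma notMemZ_neg {z : ℤ} (hz : z < 0) : ¬ memZ H z := by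
  rintro ⟨n, _, rfl⟩
  exact (Int.natCast_nonneg n).not_gt hz

lemma notMem_nonempty : {z : ℤ | ¬ memZ H z}.Nonempty :=
  ⟨-1, notMemZ_neg (by norm_num)⟩

lemma bddAbove_notMem (hH : IsNumSgp H) : BddAbove {z : ℤ | ¬ memZ H z} := by
  obtain ⟨h0, hadd, hfin⟩ := hH
  refine ⟨(hfin.toFinset.sup id : ℕ), ?_⟩
  intro z hz
  rcases lt_or_ge z 0 with h | h
  · exact h.le.trans (Int.natCast_nonneg _)
  · have hc : z.toNat ∈ Hᶜ := by
      intro hmem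
      exact hz ⟨z.toNat, hmem, Int.toNat_of_nonneg h⟩
    have := Finset.le_sup (f := id) (hfin.mem_toFinset.mpr hc)
    simp only [id] at this
    omega

lemma frob_notMemZ (hH : IsNumSgp H) : ¬ memZ H (frob H) :=
  Int.csSup_mem notMem_nonempty (bddAbove_notMem hH)

lemma memZ_of_frob_lt (hH : IsNumSgp H) {z : ℤ} (hz : frob H < z) : memZ H z := by
  by_contra h
  exact hz.not_ge (le_csSup (bddAbove_notMem hH) h)

lemma frob_mem_pseudoFrob (hH : IsNumSgp H) : frob H ∈ pseudoFrob H := by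
  refine ⟨frob_notMemZ hH, fun m hm hm0 => memZ_of_frob_lt hH ?_⟩
  have : (1 : ℤ) ≤ (m : ℤ) := by exact_mod_cast Nat.one_le_iff_ne_zero.mpr hm0
  omega

lemma pf_le_frob (hH : IsNumSgp H) {f : ℤ} (hf : f ∈ pseudoFrob H) : f ≤ frob H :=
  le_csSup (bddAbove_notMem hH) hf.1

lemma trace_memZ {z : ℤ} (hz : z ∈ trace H) : memZ H z := by
  obtain ⟨w, hw, x, hx, rfl⟩ := hz
  have := hx w hw
  rwa [add_comm] at this

lemma cond_subset_trace (hH : IsNumSgp H) : condIdeal H ⊆ trace H := by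
  intro z hz
  refine ⟨-frob H, ⟨frob H, frob_mem_pseudoFrob hH, 0, hH.1, by simp⟩,
    z + frob H, ?_, by ring⟩
  rintro w ⟨f, hf, h', hh', rfl⟩
  apply memZ_of_frob_lt hH
  have h1 : f ≤ frob H := pf_le_frob hH hf
  have h2 : (0 : ℤ) ≤ (h' : ℤ) := Int.natCast_nonneg _
  have h3 : frob H < z := hz
  omega

end Aux

/-- `res(H) ≤ n(H)`, with equality iff `tr(H) = C_H`. -/
theorem stmt_1 (H : Set ℕ) (hH : IsNumSgp H) :
    res H ≤ nongaps H ∧ (res H = nongaps H ↔ trace H = condIdeal H) := by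
  have hNfin : {x : ℕ | x ∈ H ∧ (x : ℤ) < frob H}.Finite :=
    (Set.finite_Iio (frob H).toNat).subset (fun x hx => Int.lt_toNat.mpr hx.2)
  have hsub : {h : ℕ | h ∈ H ∧ (h : ℤ) ∉ trace H} ⊆ {x : ℕ | x ∈ H ∧ (x : ℤ) < frob H} := by
    rintro h ⟨hh, ht⟩
    refine ⟨hh, ?_⟩
    have hne : (h : ℤ) ≠ frob H := fun e => frob_notMemZ hH (e ▸ ⟨h, hh, rfl⟩)
    have hnl : ¬ frob H < (h : ℤ) := fun hl => ht (cond_subset_trace hH hl)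
    omega
  have hle : res H ≤ nongaps H := Set.ncard_le_ncard hsub hNfin
  refine ⟨hle, ?_, ?_⟩
  · intro heq
    have hEq : {h : ℕ | h ∈ H ∧ (h : ℤ) ∉ trace H} = {x : ℕ | x ∈ H ∧ (x : ℤ) < frob H} :=
      Set.eq_of_subset_of_ncard_le hsub (le_of_eq heq.symm) hNfin
    apply Set.Subset.antisymm
    · intro z hz
      obtain ⟨n, hn, rfl⟩ := trace_memZ hz
      by_contra hc
      have hne : (n : ℤ) ≠ frob H := fun e => frob_notMemZ hH (e ▸ ⟨n, hn, rfl⟩)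
      have hnl : ¬ frob H < (n : ℤ) := hc
      have hlt : (n : ℤ) < frob H := by omega
      have hmem : n ∈ {h : ℕ | h ∈ H ∧ (h : ℤ) ∉ trace H} := by
        rw [hEq]; exact ⟨hn, hlt⟩
      exact hmem.2 hz
    · exact cond_subset_trace hH
  · intro htr
    apply le_antisymm hle
    apply Set.ncard_le_ncard _ (hNfin.subset hsub)
    rintro x ⟨hx, hlt⟩
    refine ⟨hx, fun ht => ?_⟩
    rw [htr] at ht
    exact absurd ht (not_lt.mpr hlt.le)
end

section
/- Let e > 2 and let a, d be coprime nonnegative integers with e ≤ a, and let H be the numerical semigroup generated by the arithmetic sequence a, a+d, a+2d, …, a+(e−1)d. Then H is nearly Gorenstein. -/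
open NumSgp

section Aux

lemma ngAux_mem_genBy_iff {A : Set ℕ} {n : ℕ} :
    n ∈ genBy A ↔ n ∈ AddSubmonoid.closure A := Iff.rfl

lemma ngAux_rep_mem (e a d : ℕ) (he : 1 ≤ e) {k t : ℕ} (ht : t ≤ k * (e - 1)) :
    k * a + t * d ∈ genBy {x : ℕ | ∃ i < e, x = a + i * d} := by
  rw [ngAux_mem_genBy_iff]
  induction k generalizing t with
  | zero =>
      have h0 : t = 0 := by omega
      subst h0
      simpa using (AddSubmonoid.closure _).zero_mem
  | succ k ih =>
      rcases le_or_gt t (e - 1) with h | h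
      · have h1 : a + t * d ∈ AddSubmonoid.closure {x : ℕ | ∃ i < e, x = a + i * d} :=
          AddSubmonoid.subset_closure ⟨t, by omega, rfl⟩
        have h2 := ih (t := 0) (by simp)
        have h3 := (AddSubmonoid.closure _).add_mem h1 h2
        have hv : (k + 1) * a + t * d = (a + t * d) + (k * a + 0 * d) := by ring
        rw [hv]; exact h3
      · have h1 : a + (e - 1) * d ∈ AddSubmonoid.closure {x : ℕ | ∃ i < e, x = a + i * d} :=
          AddSubmonoid.subset_closure ⟨e - 1, by omega, rfl⟩
        have hm : (k + 1) * (e - 1) = k * (e - 1) + (e - 1) := by ring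
        have h2 := ih (t := t - (e - 1)) (by omega)
        have h3 := (AddSubmonoid.closure _).add_mem h1 h2
        have hv : (k + 1) * a + t * d = (a + (e - 1) * d) + (k * a + (t - (e - 1)) * d) := by
          obtain ⟨t', rfl⟩ : ∃ t', t = t' + (e - 1) := ⟨t - (e - 1), by omega⟩
          simp only [Nat.add_sub_cancel]; ring
        rw [hv]; exact h3

lemma ngAux_mem_rep (e a d : ℕ) {n : ℕ}
    (hn : n ∈ genBy {x : ℕ | ∃ i < e, x = a + i * d}) :
    ∃ k t : ℕ, t ≤ k * (e - 1) ∧ n = k * a + t * d := by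
  rw [ngAux_mem_genBy_iff] at hn
  induction hn using AddSubmonoid.closure_induction with
  | mem x hx =>
      obtain ⟨i, hi, rfl⟩ := hx
      exact ⟨1, i, by omega, by ring⟩
  | zero => exact ⟨0, 0, by simp, by simp⟩
  | add x y hx hy px py =>
      obtain ⟨k1, t1, h1, rfl⟩ := px
      obtain ⟨k2, t2, h2, rfl⟩ := py
      refine ⟨k1 + k2, t1 + t2, ?_, by ring⟩
      have : (k1 + k2) * (e - 1) = k1 * (e - 1) + k2 * (e - 1) := by ring
      omega

lemma ngAux_memZ_rep (e a d : ℕ) (he : 1 ≤ e) {z : ℤ} :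
    memZ (genBy {x : ℕ | ∃ i < e, x = a + i * d}) z ↔
      ∃ k t : ℕ, t ≤ k * (e - 1) ∧ z = (k : ℤ) * a + (t : ℤ) * d := by
  constructor
  · rintro ⟨n, hn, rfl⟩
    obtain ⟨k, t, h1, rfl⟩ := ngAux_mem_rep e a d hn
    exact ⟨k, t, h1, by push_cast; ring⟩
  · rintro ⟨k, t, h1, rfl⟩
    exact ⟨k * a + t * d, ngAux_rep_mem e a d he h1, by push_cast; ring⟩

lemma ngAux_canon_rep (a d : ℕ) (ha : 0 < a) (hcop : Nat.Coprime a d) (z : ℤ) :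
    ∃ (k : ℤ) (t : ℕ), t < a ∧ z = k * a + (t : ℤ) * d := by
  have hc : IsCoprime (a : ℤ) (d : ℤ) := by
    exact_mod_cast Nat.isCoprime_iff_coprime.mpr hcop
  obtain ⟨u, v, huv⟩ := hc
  have ha' : (0 : ℤ) < a := by exact_mod_cast ha
  set T : ℤ := (z * v) % a with hT
  have hT0 : 0 ≤ T := Int.emod_nonneg _ (by positivity)
  have hTa : T < a := Int.emod_lt_of_pos _ ha'
  have hdm : (a : ℤ) * ((z * v) / a) + T = z * v := Int.mul_ediv_add_emod _ _
  refine ⟨z * u + ((z * v) / a) * d, T.toNat, by omega, ?_⟩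
  have h2 : ((T.toNat : ℤ)) = T := Int.toNat_of_nonneg hT0
  rw [h2]
  linear_combination (-z) * huv + (-(d : ℤ)) * hdm

lemma ngAux_rep_shift (a d : ℕ) (ha : 0 < a) (hcop : Nat.Coprime a d)
    {k1 k2 t1 t2 : ℤ} (h : k1 * a + t1 * d = k2 * a + t2 * d) :
    ∃ s : ℤ, t2 = t1 + s * a ∧ k2 = k1 - s * d := by
  have hc : IsCoprime (a : ℤ) (d : ℤ) := by
    exact_mod_cast Nat.isCoprime_iff_coprime.mpr hcop
  have hdvd : (a : ℤ) ∣ (t2 - t1) * d := ⟨k1 - k2, by linarith [h]⟩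
  have hdvd2 : (a : ℤ) ∣ (t2 - t1) := hc.dvd_of_dvd_mul_right hdvd
  obtain ⟨s, hs⟩ := hdvd2
  refine ⟨s, by linarith, ?_⟩
  have ha' : (a : ℤ) ≠ 0 := by exact_mod_cast ha.ne'
  have h3 : (k1 - s * d) * a = k2 * a := by
    have : (t2 - t1) * d = (k1 - k2) * a := by linarith
    rw [hs] at this
    nlinarith [this]
  have := mul_right_cancel₀ ha' h3
  linarith

lemma ngAux_memZ_canon (e a d : ℕ) (he : 2 ≤ e) (ha : 0 < a) (hcop : Nat.Coprime a d)
    {t : ℕ} (ht : t < a) (k : ℤ) :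
    memZ (genBy {x : ℕ | ∃ i < e, x = a + i * d}) (k * a + (t : ℤ) * d) ↔
      (t : ℤ) ≤ k * ((e : ℤ) - 1) := by
  have hE : (1 : ℤ) ≤ (e : ℤ) - 1 := by
    have : (2 : ℤ) ≤ e := by exact_mod_cast he
    linarith
  constructor
  · intro hm
    obtain ⟨k2, t2, h1, heq⟩ := (ngAux_memZ_rep e a d (by omega)).1 hm
    obtain ⟨s, hs1, hs2⟩ := ngAux_rep_shift a d ha hcop heq
    have ht2 : (0 : ℤ) ≤ t2 := by positivity
    have hs0 : 0 ≤ s := by nlinarith [ht2, hs1, (show (0:ℤ) < a by exact_mod_cast ha)]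
    have hle : (t : ℤ) ≤ t2 := by nlinarith [(show (0:ℤ) < a by exact_mod_cast ha)]
    have h1' : (t2 : ℤ) ≤ (k2 : ℤ) * ((e : ℤ) - 1) := by
      have := h1
      have hc : ((k2 * (e - 1) : ℕ) : ℤ) = (k2 : ℤ) * ((e : ℤ) - 1) := by
        push_cast [Nat.cast_sub (show 1 ≤ e by omega)]; ring
      calc (t2 : ℤ) ≤ ((k2 * (e - 1) : ℕ) : ℤ) := by exact_mod_cast h1
        _ = (k2 : ℤ) * ((e : ℤ) - 1) := hc
    have hd0 : (0 : ℤ) ≤ d := by positivity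
    have hk2k : (k2 : ℤ) ≤ k := by nlinarith
    calc (t : ℤ) ≤ t2 := hle
      _ ≤ (k2 : ℤ) * ((e : ℤ) - 1) := h1'
      _ ≤ k * ((e : ℤ) - 1) := by nlinarith
  · intro hle
    have hk0 : 0 ≤ k := by nlinarith [(show (0:ℤ) ≤ t by positivity)]
    have hkt : k = (k.toNat : ℤ) := (Int.toNat_of_nonneg hk0).symm
    refine (ngAux_memZ_rep e a d (by omega)).2 ⟨k.toNat, t, ?_, by rw [← hkt]⟩
    have : (t : ℤ) ≤ (k.toNat : ℤ) * ((e : ℤ) - 1) := by rw [← hkt]; exact hle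
    have hc : ((k.toNat * (e - 1) : ℕ) : ℤ) = (k.toNat : ℤ) * ((e : ℤ) - 1) := by
      push_cast [Nat.cast_sub (show 1 ≤ e by omega)]; ring
    exact_mod_cast hc ▸ this

end Aux

section PF

lemma ngAux_PF_sub (e a d q r : ℕ) (he : 2 < e) (hea : e ≤ a) (hd : 0 < d)
    (hcop : Nat.Coprime a d)
    (hq : a - 1 = q * (e - 1) + r) (hr1 : 1 ≤ r) (hr2 : r ≤ e - 1)
    {f : ℤ} (hf : f ∈ pseudoFrob (genBy {x : ℕ | ∃ i < e, x = a + i * d})) :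
    ∃ j : ℕ, j < r ∧ f = (q : ℤ) * a + ((a : ℤ) - 1 - j) * d := by
  have ha : 3 ≤ a := by omega
  obtain ⟨hfn, hfm⟩ := hf
  obtain ⟨k, t, ht, rfl⟩ := ngAux_canon_rep a d (by omega) hcop f
  have hnt : k * ((e : ℤ) - 1) < t := by
    by_contra hcon
    push_neg at hcon
    exact hfn ((ngAux_memZ_canon e a d (by omega) (by omega) hcop ht k).2 hcon)
  have hqZ : (a : ℤ) - 1 = (q : ℤ) * ((e : ℤ) - 1) + r := by
    have h := congrArg (fun n : ℕ => (n : ℤ)) hq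
    push_cast [Nat.cast_sub (show 1 ≤ a by omega), Nat.cast_sub (show 1 ≤ e by omega)] at h
    linarith
  rcases le_or_gt (t + e) a with hcase | hcase
  · exfalso
    have hmem := ngAux_rep_mem e a d (show 1 ≤ e by omega) (k := 1) (t := e - 1) (by omega)
    have hne : 1 * a + (e - 1) * d ≠ 0 := (Nat.add_pos_left (by omega) _).ne'
    have hmz := hfm _ hmem hne
    have hval : k * (a : ℤ) + (t : ℤ) * d + ((1 * a + (e - 1) * d : ℕ) : ℤ) =
        (k + 1) * a + ((t + (e - 1) : ℕ) : ℤ) * d := by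
      push_cast [Nat.cast_sub (show 1 ≤ e by omega)]; ring
    rw [hval] at hmz
    have h5 := (ngAux_memZ_canon e a d (by omega) (by omega) hcop
      (show t + (e - 1) < a by omega) (k + 1)).1 hmz
    push_cast [Nat.cast_sub (show 1 ≤ e by omega)] at h5
    nlinarith [h5, hnt]
  · have hta : t ≤ a - 1 := by omega
    set j := a - 1 - t with hjdef
    have hjt : t + j = a - 1 := by omega
    have hje : j ≤ e - 2 := by omega
    have hmem := ngAux_rep_mem e a d (show 1 ≤ e by omega) (k := 1) (t := j) (by omega)
    have hne : 1 * a + j * d ≠ 0 := (Nat.add_pos_left (by omega) _).ne'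
    have hmz := hfm _ hmem hne
    have hval : k * (a : ℤ) + (t : ℤ) * d + ((1 * a + j * d : ℕ) : ℤ) =
        (k + 1) * a + ((t + j : ℕ) : ℤ) * d := by
      push_cast; ring
    rw [hval] at hmz
    have h5 := (ngAux_memZ_canon e a d (by omega) (by omega) hcop
      (show t + j < a by omega) (k + 1)).1 hmz
    have htjZ : ((t + j : ℕ) : ℤ) = (a : ℤ) - 1 := by
      push_cast
      have : ((t : ℤ) + j) = ((t + j : ℕ) : ℤ) := by push_cast; ring
      rw [show ((t:ℤ) + (j:ℤ)) = (((t + j : ℕ)) : ℤ) by push_cast; ring]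
      rw [hjt]; push_cast [Nat.cast_sub (show 1 ≤ a by omega)]; ring
    rw [htjZ] at h5
    have hE1 : (1 : ℤ) ≤ (e : ℤ) - 1 := by
      have : (3 : ℤ) ≤ e := by exact_mod_cast he
      linarith
    have htZ : (t : ℤ) = (a : ℤ) - 1 - j := by
      have h := congrArg (fun n : ℕ => (n : ℤ)) hjt
      push_cast [Nat.cast_sub (show 1 ≤ a by omega)] at h
      push_cast [Nat.cast_sub (show 1 ≤ a by omega)]
      linarith
    have hrZ1 : (1 : ℤ) ≤ r := by exact_mod_cast hr1
    have hrZ2 : (r : ℤ) ≤ (e : ℤ) - 1 := by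
      have := congrArg (fun n : ℕ => (n : ℤ)) (show r = r by rfl)
      have h2 : ((r : ℤ)) ≤ ((e - 1 : ℕ) : ℤ) := by exact_mod_cast hr2
      rwa [Nat.cast_sub (show 1 ≤ e by omega)] at h2
    have hjZ0 : (0 : ℤ) ≤ j := by positivity
    -- q ≤ k
    have hq1 : (q : ℤ) * ((e:ℤ)-1) < (k + 1) * ((e:ℤ)-1) := by linarith
    have hqk : (q : ℤ) < k + 1 := lt_of_mul_lt_mul_right hq1 (by linarith)
    -- k ≤ q
    have hk1 : k * ((e:ℤ)-1) < ((q:ℤ) + 1) * ((e:ℤ)-1) := by nlinarith [hnt, htZ]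
    have hkq : k < (q : ℤ) + 1 := lt_of_mul_lt_mul_right hk1 (by linarith)
    have hkqe : k = (q : ℤ) := by omega
    have hjr : (j : ℤ) < r := by
      rw [hkqe, htZ] at hnt
      linarith
    refine ⟨j, by exact_mod_cast hjr, ?_⟩
    rw [hkqe, htZ]

lemma ngAux_PF_mem (e a d q r : ℕ) (he : 2 < e) (hea : e ≤ a) (hd : 0 < d)
    (hcop : Nat.Coprime a d)
    (hq : a - 1 = q * (e - 1) + r) (hr1 : 1 ≤ r) (hr2 : r ≤ e - 1)
    {j : ℕ} (hj : j < r) :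
    ((q : ℤ) * a + ((a : ℤ) - 1 - j) * d) ∈
      pseudoFrob (genBy {x : ℕ | ∃ i < e, x = a + i * d}) := by
  have ha : 3 ≤ a := by omega
  have hja : j + 1 < a := by omega
  have hqZ : (a : ℤ) - 1 = (q : ℤ) * ((e : ℤ) - 1) + r := by
    have h := congrArg (fun n : ℕ => (n : ℤ)) hq
    push_cast [Nat.cast_sub (show 1 ≤ a by omega), Nat.cast_sub (show 1 ≤ e by omega)] at h
    linarith
  have hval : (q : ℤ) * a + ((a : ℤ) - 1 - j) * d =
      (q : ℤ) * a + ((a - 1 - j : ℕ) : ℤ) * d := by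
    push_cast [Nat.cast_sub (show j ≤ a - 1 by omega), Nat.cast_sub (show 1 ≤ a by omega)]
    ring
  constructor
  · rw [hval]
    intro hm
    have h5 := (ngAux_memZ_canon e a d (by omega) (by omega) hcop
      (show a - 1 - j < a by omega) (q : ℤ)).1 hm
    have hc : ((a - 1 - j : ℕ) : ℤ) = (a : ℤ) - 1 - j := by
      push_cast [Nat.cast_sub (show j ≤ a - 1 by omega), Nat.cast_sub (show 1 ≤ a by omega)]
      ring
    rw [hc] at h5
    have : (j : ℤ) < r := by exact_mod_cast hj
    linarith
  · intro m hm hm0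
    obtain ⟨k2, t2, h2, rfl⟩ := ngAux_mem_rep e a d hm
    have hk2 : 1 ≤ k2 := by
      rcases Nat.eq_zero_or_pos k2 with h | h
      · exfalso; subst h; simp at h2; subst h2; simp at hm0
      · exact h
    rcases le_or_gt t2 j with hc | hc
    · apply (ngAux_memZ_rep e a d (by omega)).2
      refine ⟨q + k2, a - 1 - j + t2, ?_, ?_⟩
      · obtain ⟨K, hK⟩ : ∃ K, K = k2 * (e - 1) := ⟨_, rfl⟩
        obtain ⟨Q, hQ⟩ : ∃ Q, Q = q * (e - 1) := ⟨_, rfl⟩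
        have hmul : (q + k2) * (e - 1) = Q + K := by rw [hQ, hK]; ring
        have hE : e - 1 ≤ K := hK ▸ Nat.le_mul_of_pos_left _ hk2
        rw [← hQ] at hq
        rw [← hK] at h2
        rw [hmul]
        omega
      · push_cast [Nat.cast_sub (show j ≤ a - 1 by omega), Nat.cast_sub (show 1 ≤ a by omega)]
        ring
    · apply (ngAux_memZ_rep e a d (by omega)).2
      refine ⟨q + k2 + d, t2 - j - 1, ?_, ?_⟩
      · obtain ⟨K, hK⟩ : ∃ K, K = k2 * (e - 1) := ⟨_, rfl⟩
        obtain ⟨M, hM⟩ : ∃ M, M = (q + k2 + d) * (e - 1) := ⟨_, rfl⟩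
        have hKM : K ≤ M := by
          rw [hK, hM]; exact Nat.mul_le_mul_right _ (by omega)
        rw [← hK] at h2
        rw [← hM]
        omega
      · push_cast [Nat.cast_sub (show 1 ≤ t2 - j by omega), Nat.cast_sub (show j ≤ t2 by omega)]
        ring

end PF



/-- a numerical semigroup generated by an arithmetic sequence
`a, a+d, …, a+(e-1)d` with `gcd(a,d) = 1`, `2 < e ≤ a`, is nearly Gorenstein. -/
theorem stmt_2 (e a d : ℕ) (he : 2 < e) (hcop : Nat.Coprime a d) (hea : e ≤ a)
    (H : Set ℕ) (hH : H = genBy {x : ℕ | ∃ i < e, x = a + i * d}) :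
    NearlyGorenstein H := by
  subst hH
  have hd : 0 < d := by
    rcases Nat.eq_zero_or_pos d with h | h
    · exfalso; subst h; rw [Nat.coprime_zero_right] at hcop; omega
    · exact h
  obtain ⟨q, r, hr1, hr2, hq⟩ :
      ∃ q r : ℕ, 1 ≤ r ∧ r ≤ e - 1 ∧ a - 1 = q * (e - 1) + r := by
    refine ⟨(a - 2) / (e - 1), (a - 2) % (e - 1) + 1, by omega, ?_, ?_⟩
    · have := Nat.mod_lt (a - 2) (show 0 < e - 1 by omega)
      omega
    · have h1 := Nat.div_add_mod (a - 2) (e - 1)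
      rw [Nat.mul_comm] at h1
      generalize hX : (a - 2) / (e - 1) * (e - 1) = X at h1 ⊢
      omega
  intro m hm hm0
  obtain ⟨k, t, ht, rfl⟩ := ngAux_mem_rep e a d hm
  have hk : 1 ≤ k := by
    rcases Nat.eq_zero_or_pos k with h | h
    · exfalso; subst h; simp at ht; subst ht; simp at hm0
    · exact h
  set j0 := min t (r - 1) with hj0def
  have hj0r : j0 < r := by omega
  have hj0t : j0 ≤ t := min_le_left _ _
  have hpf0 := ngAux_PF_mem e a d q r he hea hd hcop hq hr1 hr2 hj0r
  refine ⟨-((q : ℤ) * a + ((a : ℤ) - 1 - j0) * d),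
    ⟨_, hpf0, 0, ?_, by simp⟩,
    ((k * a + t * d : ℕ) : ℤ) + ((q : ℤ) * a + ((a : ℤ) - 1 - j0) * d), ?_, by ring⟩
  · exact ngAux_mem_genBy_iff.2 (zero_mem _)
  · intro w hw
    obtain ⟨f', hf', h', hh', rfl⟩ := hw
    obtain ⟨j, hjr, rfl⟩ := ngAux_PF_sub e a d q r he hea hd hcop hq hr1 hr2 hf'
    have htt' : t - j0 + j ≤ k * (e - 1) := by
      obtain ⟨K, hK⟩ : ∃ K, K = k * (e - 1) := ⟨_, rfl⟩
      have hE : e - 1 ≤ K := hK ▸ Nat.le_mul_of_pos_left _ hk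
      rw [← hK] at ht ⊢
      omega
    refine ⟨k * a + (t - j0 + j) * d + h',
      ngAux_mem_genBy_iff.2 ((AddSubmonoid.closure _).add_mem
        (ngAux_mem_genBy_iff.1 (ngAux_rep_mem e a d (by omega) htt'))
        (ngAux_mem_genBy_iff.1 hh')), ?_⟩
    push_cast [Nat.cast_sub hj0t]
    ring
end

section
/- Let e > 2 and let a, d be coprime nonnegative integers with e ≤ a, and let H be the numerical semigroup generated by the arithmetic sequence a, a+d, a+2d, …, a+(e−1)d. Then H is symmetric if and only if a ≡ 2 (mod e−1). -/
open NumSgp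

namespace Stmt3aux

/-- ceiling of t/k -/
def c (k t : ℕ) : ℕ := (t + k - 1) / k

lemma c_spec (k t : ℕ) (hk : 0 < k) : t ≤ k * c k t ∧ k * c k t ≤ t + k - 1 := by
  have h1 := Nat.div_add_mod (t + k - 1) k
  have h2 := Nat.mod_lt (t + k - 1) hk
  unfold c
  omega

lemma c_mono (k t t' : ℕ) (h : t ≤ t') : c k t ≤ c k t' :=
  Nat.div_le_div_right (by omega)

/-- minimal nonneg element of H in class t·d mod a -/
def w (k a d t : ℕ) : ℕ := c k t * a + t * d

lemma mem_genBy_iff (k a d : ℕ) (hk : 0 < k) (n : ℕ) :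
    n ∈ genBy {x : ℕ | ∃ i < k + 1, x = a + i * d} ↔
      ∃ s t, t ≤ k * s ∧ n = s * a + t * d := by
  constructor
  · intro hn
    induction hn using AddSubmonoid.closure_induction with
    | mem x hx =>
      obtain ⟨i, hi, rfl⟩ := hx
      exact ⟨1, i, by omega, by ring⟩
    | zero => exact ⟨0, 0, by omega, by ring⟩
    | add x y hx hy ihx ihy =>
      obtain ⟨s1, t1, h1, rfl⟩ := ihx
      obtain ⟨s2, t2, h2, rfl⟩ := ihy
      exact ⟨s1 + s2, t1 + t2, by nlinarith, by ring⟩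
  · rintro ⟨s, t, hts, rfl⟩
    clear hk
    induction s generalizing t with
    | zero =>
      have : t = 0 := by omega
      subst this
      simp only [zero_mul, add_zero]
      exact AddSubmonoid.zero_mem _
    | succ s ih =>
      have hk1 : k * (s + 1) = k * s + k := by ring
      have hia : (s + 1) * a = s * a + a := by ring
      set i := min t k with hi
      have hik : i ≤ k := Nat.min_le_right _ _
      have hit : i ≤ t := Nat.min_le_left _ _
      have hrest_le : t - i ≤ k * s := by
        rcases le_total t k with h | h
        · have : i = t := by simp [hi, h]
          omega
        · have : i = k := by simp [hi, h]
          omega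
      have hgen : a + i * d ∈ genBy {x : ℕ | ∃ j < k + 1, x = a + j * d} :=
        AddSubmonoid.subset_closure ⟨i, by omega, rfl⟩
      have hrest : s * a + (t - i) * d ∈ genBy {x : ℕ | ∃ j < k + 1, x = a + j * d} :=
        ih (t - i) hrest_le
      have hsplit : i * d + (t - i) * d = t * d := by
        rw [← Nat.add_mul]; congr 1; omega
      have heq : (s + 1) * a + t * d = (a + i * d) + (s * a + (t - i) * d) := by omega
      rw [heq]
      exact AddSubmonoid.add_mem _ hgen hrest

lemma mem_genBy_iff' (k a d : ℕ) (hk : 0 < k) (ha : 0 < a) (n : ℕ) :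
    n ∈ genBy {x : ℕ | ∃ i < k + 1, x = a + i * d} ↔
      ∃ s t, t < a ∧ t ≤ k * s ∧ n = s * a + t * d := by
  rw [mem_genBy_iff k a d hk]
  constructor
  · rintro ⟨s, t, hts, rfl⟩
    induction t using Nat.strong_induction_on generalizing s with
    | _ t ih =>
      rcases lt_or_ge t a with h | h
      · exact ⟨s, t, h, hts, rfl⟩
      · have hklt : k * s ≤ k * (s + d) := by nlinarith
        have h1 : t - a ≤ k * (s + d) := by omega
        have h2 : s * a + t * d = (s + d) * a + (t - a) * d := by
          have : (t - a) * d + a * d = t * d := by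
            rw [← Nat.add_mul]; congr 1; omega
          have e1 : (s + d) * a = s * a + d * a := by ring
          have e2 : a * d = d * a := by ring
          omega
        rw [h2]
        exact ih (t - a) (by omega) (s + d) h1
  · rintro ⟨s, t, _, hts, rfl⟩
    exact ⟨s, t, hts, rfl⟩

lemma mem_genBy_w (k a d : ℕ) (hk : 0 < k) (ha : 0 < a) (n : ℕ) :
    n ∈ genBy {x : ℕ | ∃ i < k + 1, x = a + i * d} ↔
      ∃ t < a, ∃ m : ℕ, n = w k a d t + m * a := by
  rw [mem_genBy_iff' k a d hk ha]
  constructor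
  · rintro ⟨s, t, hta, hts, rfl⟩
    have hcs := c_spec k t hk
    have hsc : c k t ≤ s := by
      by_contra h
      push_neg at h
      have : k * s + k ≤ k * c k t := by
        calc k * s + k = k * (s + 1) := by ring
        _ ≤ k * c k t := Nat.mul_le_mul_left _ (by omega)
      omega
    refine ⟨t, hta, s - c k t, ?_⟩
    unfold w
    have : (s - c k t) * a + c k t * a = s * a := by
      rw [← Nat.add_mul]; congr 1; omega
    omega
  · rintro ⟨t, hta, m, rfl⟩
    have hcs := c_spec k t hk
    refine ⟨c k t + m, t, hta, by nlinarith, by unfold w; ring⟩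

/-- class uniqueness -/
lemma class_unique (k a d : ℕ) (hcop : Nat.Coprime a d) (t1 t2 : ℕ)
    (h1 : t1 < a) (h2 : t2 < a) (z : ℤ)
    (hd1 : (a : ℤ) ∣ z - t1 * d) (hd2 : (a : ℤ) ∣ z - t2 * d) : t1 = t2 := by
  have hdvd : (a : ℤ) ∣ ((t1 : ℤ) - t2) * d := by
    have : ((t1 : ℤ) - t2) * d = (z - t2 * d) - (z - t1 * d) := by ring
    rw [this]
    exact dvd_sub hd2 hd1
  have hco : IsCoprime (a : ℤ) (d : ℤ) := by
    rw [Int.isCoprime_iff_gcd_eq_one]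
    simpa [Int.gcd] using hcop
  have := hco.dvd_of_dvd_mul_right hdvd
  have habs : ((a : ℤ)) ∣ (t1 : ℤ) - t2 := this
  have h0 : (t1 : ℤ) - t2 = 0 := Int.eq_zero_of_abs_lt_dvd habs (by rw [abs_lt]; omega)
  omega

lemma w_class (k a d t : ℕ) : (a : ℤ) ∣ (w k a d t : ℤ) - t * d := by
  unfold w
  push_cast
  exact ⟨c k t, by ring⟩

/-- existence of class representative -/
lemma class_exists (a d : ℕ) (ha : 0 < a) (hcop : Nat.Coprime a d) (z : ℤ) :
    ∃ t < a, (a : ℤ) ∣ z - t * d := by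
  haveI : NeZero a := ⟨by omega⟩
  have hu : IsUnit (d : ZMod a) := by
    rw [ZMod.isUnit_iff_coprime]
    exact (hcop.symm)
  obtain ⟨u, hu⟩ := hu
  refine ⟨((u⁻¹ : (ZMod a)ˣ) * (z : ZMod a) : ZMod a).val, ZMod.val_lt _, ?_⟩
  rw [← ZMod.intCast_zmod_eq_zero_iff_dvd]
  push_cast
  rw [ZMod.natCast_val, ZMod.cast_id]
  rw [← hu]
  linear_combination -(z : ZMod a) * u.inv_mul

/-- the master membership criterion -/
lemma mem_crit (k a d : ℕ) (hk : 0 < k) (ha : 0 < a) (hcop : Nat.Coprime a d)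
    (n t : ℕ) (hta : t < a) (hdvd : (a : ℤ) ∣ (n : ℤ) - t * d) :
    n ∈ genBy {x : ℕ | ∃ i < k + 1, x = a + i * d} ↔ w k a d t ≤ n := by
  rw [mem_genBy_w k a d hk ha]
  constructor
  · rintro ⟨t', ht'a, m, rfl⟩
    have : t' = t := by
      refine class_unique k a d hcop t' t ht'a hta _ ?_ hdvd
      have hw := w_class k a d t'
      have e : ((w k a d t' + m * a : ℕ) : ℤ) - t' * d
          = ((w k a d t' : ℤ) - t' * d) + a * m := by push_cast; ring
      rw [e]
      exact dvd_add hw ⟨m, rfl⟩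
    subst this
    omega
  · intro hwn
    have hdiff : (a : ℤ) ∣ (n : ℤ) - w k a d t := by
      have hw := w_class k a d t
      have e : (n : ℤ) - w k a d t = ((n : ℤ) - t * d) - ((w k a d t : ℤ) - t * d) := by ring
      rw [e]
      exact dvd_sub hdvd hw
    obtain ⟨m, hm⟩ := hdiff
    have ha' : (1 : ℤ) ≤ a := by exact_mod_cast ha
    have hwn' : (w k a d t : ℤ) ≤ n := by exact_mod_cast hwn
    have hm0 : 0 ≤ m := by
      by_contra h
      push_neg at h
      have : (n : ℤ) - w k a d t ≤ -a := by
        rw [hm]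
        nlinarith
      omega
    refine ⟨t, hta, m.toNat, ?_⟩
    have : (n : ℤ) = w k a d t + m.toNat * a := by
      rw [Int.toNat_of_nonneg hm0, mul_comm]
      linarith
    exact_mod_cast this

lemma c_eq (k t q : ℕ) (hk : 0 < k) (h1 : k * q < t) (h2 : t ≤ k * (q + 1)) :
    c k t = q + 1 := by
  have hs := c_spec k t hk
  by_contra h
  rcases lt_or_gt_of_ne h with hlt | hgt
  · have h3 : k * c k t ≤ k * q := Nat.mul_le_mul_left _ (by omega)
    omega
  · have h3 : k * (q + 2) ≤ k * c k t := Nat.mul_le_mul_left _ (by omega)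
    have h4 : k * (q + 2) = k * (q + 1) + k := by ring
    omega

lemma c_pair (k m n q : ℕ) (hk : 0 < k) (hmn : m + n = k * q + 1) :
    c k m + c k n = q + 1 := by
  have h1 := c_spec k m hk
  have h2 := c_spec k n hk
  have hd : k * (c k m + c k n) = k * c k m + k * c k n := by ring
  by_contra h
  rcases lt_or_gt_of_ne h with hlt | hgt
  · have h3 : k * (c k m + c k n) ≤ k * q := Nat.mul_le_mul_left _ (by omega)
    omega
  · have h3 : k * (q + 2) ≤ k * (c k m + c k n) := Nat.mul_le_mul_left _ (by omega)
    have h4 : k * (q + 2) = k * q + k + k := by ring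
    omega

lemma main (k a d : ℕ) (hk : 2 ≤ k) (ha : k + 1 ≤ a) (hcop : Nat.Coprime a d) :
    IsSymmetric (genBy {x : ℕ | ∃ i < k + 1, x = a + i * d}) ↔ (a - 2) % k = 0 := by
  set H := genBy {x : ℕ | ∃ i < k + 1, x = a + i * d} with hHdef
  have hk0 : 0 < k := by omega
  have ha0 : 0 < a := by omega
  have hd : 0 < d := by
    rcases Nat.eq_zero_or_pos d with h | h
    · subst h
      rw [Nat.coprime_zero_right] at hcop
      omega
    · exact h
  set q := (a - 2) / k with hq
  set r := (a - 2) % k with hr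
  have hqr : a - 2 = k * q + r := (Nat.div_add_mod _ _).symm
  have hrk : r < k := Nat.mod_lt _ hk0
  have ekq : k * (q + 1) = k * q + k := by ring
  set F : ℕ := q * a + (a - 1) * d with hF
  have hca1 : c k (a - 1) = q + 1 := c_eq k (a - 1) q hk0 (by omega) (by omega)
  have hwa1 : w k a d (a - 1) = (q + 1) * a + (a - 1) * d := by
    unfold w; rw [hca1]
  have hwF : w k a d (a - 1) = F + a := by rw [hwa1, hF]; ring
  have hwle : ∀ t, t ≤ a - 1 → w k a d t ≤ w k a d (a - 1) := fun t ht => by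
    unfold w
    exact add_le_add (Nat.mul_le_mul_right _ (c_mono _ _ _ ht)) (Nat.mul_le_mul_right _ ht)
  -- everything above F is in H
  have hmemgt : ∀ z : ℤ, (F : ℤ) < z → memZ H z := by
    intro z hz
    have hF0 : (0 : ℤ) ≤ F := Int.natCast_nonneg F
    obtain ⟨n, rfl⟩ := Int.eq_ofNat_of_zero_le (by omega : (0:ℤ) ≤ z)
    obtain ⟨t, hta, hdvd⟩ := class_exists a d ha0 hcop (n : ℤ)
    have hwt : w k a d t ≤ F + a := by rw [← hwF]; exact hwle t (by omega)
    have hwn : w k a d t ≤ n := by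
      have hwc := w_class k a d t
      have hdiff : (a : ℤ) ∣ (n : ℤ) - w k a d t := by
        have e : (n : ℤ) - w k a d t = ((n : ℤ) - t * d) - ((w k a d t : ℤ) - t * d) := by ring
        rw [e]; exact dvd_sub hdvd hwc
      obtain ⟨m, hm⟩ := hdiff
      have hwtz : (w k a d t : ℤ) ≤ (F : ℤ) + a := by exact_mod_cast hwt
      by_contra hcon
      push_neg at hcon
      have hcon' : (n : ℤ) < w k a d t := by exact_mod_cast hcon
      have ha' : (0 : ℤ) < a := by exact_mod_cast ha0
      have hmneg : m ≤ -1 := by nlinarith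
      have : (a : ℤ) * m ≤ (a : ℤ) * (-1) := by
        exact mul_le_mul_of_nonneg_left hmneg (le_of_lt ha')
      omega
    exact ⟨n, (mem_crit k a d hk0 ha0 hcop n t hta hdvd).mpr hwn, rfl⟩
  have hFnot : ¬ memZ H (F : ℤ) := by
    rintro ⟨n, hn, hne⟩
    have hnF : n = F := by exact_mod_cast hne
    have hdvd : (a : ℤ) ∣ (n : ℤ) - ((a - 1 : ℕ) : ℤ) * d := by
      refine ⟨q, ?_⟩
      rw [hnF, hF]
      push_cast
      ring
    have hle := (mem_crit k a d hk0 ha0 hcop n (a - 1) (by omega) hdvd).mp hn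
    rw [hwF, hnF] at hle
    omega
  have hub : ∀ z ∈ {z : ℤ | ¬ memZ H z}, z ≤ (F : ℤ) := by
    intro z hz
    by_contra h
    push_neg at h
    exact hz (hmemgt z h)
  have hfrob : frob H = (F : ℤ) :=
    le_antisymm (csSup_le ⟨(F : ℤ), hFnot⟩ hub) (le_csSup ⟨(F : ℤ), hub⟩ hFnot)
  constructor
  · -- symmetric → r = 0
    intro hsym
    by_contra hr0
    have hr1 : 1 ≤ r := by omega
    have hca2 : c k (a - 2) = q + 1 := c_eq k (a - 2) q hk0 (by omega) (by omega)
    have hc1 : c k 1 = 1 := by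
      have e0 : k * 0 = 0 := by ring
      have e1 : k * 1 = k := by ring
      exact c_eq k 1 0 hk0 (by omega) (by omega)
    rcases hsym (d : ℤ) with h | h
    · obtain ⟨n, hn, hne⟩ := h
      have hnd : n = d := by exact_mod_cast hne
      have hdvd : (a : ℤ) ∣ (n : ℤ) - ((1 : ℕ) : ℤ) * d := ⟨0, by rw [hnd]; push_cast; ring⟩
      have hle := (mem_crit k a d hk0 ha0 hcop n 1 (by omega) hdvd).mp hn
      unfold w at hle
      rw [hc1, hnd] at hle
      omega
    · rw [hfrob] at h
      set N : ℕ := q * a + (a - 2) * d with hN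
      have e : (a - 1) * d = (a - 2) * d + d := by
        have e' : a - 1 = (a - 2) + 1 := by omega
        rw [e']; ring
      have hNz : (F : ℤ) - d = (N : ℤ) := by
        have : F = N + d := by rw [hF, hN]; omega
        rw [this]; push_cast; ring
      rw [hNz] at h
      obtain ⟨n, hn, hne⟩ := h
      have hnN : n = N := by exact_mod_cast hne
      have hdvd : (a : ℤ) ∣ (n : ℤ) - ((a - 2 : ℕ) : ℤ) * d := by
        refine ⟨q, ?_⟩
        rw [hnN, hN]
        push_cast; ring
      have hle := (mem_crit k a d hk0 ha0 hcop n (a - 2) (by omega) hdvd).mp hn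
      unfold w at hle
      rw [hca2, hnN, hN] at hle
      have e2 : (q + 1) * a = q * a + a := by ring
      omega
  · -- r = 0 → symmetric
    intro hr0
    intro z
    by_cases hz : memZ H z
    · exact Or.inl hz
    right
    rw [hfrob]
    have hF0 : (0 : ℤ) ≤ F := Int.natCast_nonneg F
    rcases lt_or_ge z 0 with hzneg | hz0
    · exact hmemgt _ (by omega)
    obtain ⟨n, rfl⟩ := Int.eq_ofNat_of_zero_le hz0
    obtain ⟨t, hta, hdvd⟩ := class_exists a d ha0 hcop (n : ℤ)
    have hnH : n ∉ H := fun h => hz ⟨n, h, rfl⟩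
    have hnw : n < w k a d t := by
      by_contra h
      push_neg at h
      exact hnH ((mem_crit k a d hk0 ha0 hcop n t hta hdvd).mpr h)
    have hwc := w_class k a d t
    have hdiff : (a : ℤ) ∣ (w k a d t : ℤ) - n := by
      have e : (w k a d t : ℤ) - n = ((w k a d t : ℤ) - t * d) - ((n : ℤ) - t * d) := by ring
      rw [e]; exact dvd_sub hwc hdvd
    have ha' : (0 : ℤ) < a := by exact_mod_cast ha0
    have hna : (n : ℤ) + a ≤ w k a d t := by
      obtain ⟨m, hm⟩ := hdiff
      have hnw' : (n : ℤ) < w k a d t := by exact_mod_cast hnw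
      have hm1 : 1 ≤ m := by
        by_contra hc
        push_neg at hc
        nlinarith
      have : (a : ℤ) * 1 ≤ (a : ℤ) * m := mul_le_mul_of_nonneg_left hm1 (le_of_lt ha')
      omega
    set t' := a - 1 - t with ht'
    have hpair : c k t + c k t' = q + 1 := c_pair k t t' q hk0 (by omega)
    have hwsum : w k a d t + w k a d t' = w k a d (a - 1) := by
      have e3 : c k t * a + c k t' * a = (q + 1) * a := by rw [← Nat.add_mul, hpair]
      have e4 : t * d + t' * d = (a - 1) * d := by
        rw [← Nat.add_mul]; congr 1; omega
      rw [hwa1]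
      unfold w
      omega
    have hwtF : (w k a d t : ℤ) ≤ (F : ℤ) + a := by
      have := hwle t (by omega)
      rw [hwF] at this
      exact_mod_cast this
    have hnF : (n : ℤ) ≤ F := by omega
    set N : ℕ := F - n with hNdef
    have hNz : (N : ℤ) = (F : ℤ) - n := by omega
    have h1 : (w k a d (a - 1) : ℤ) = w k a d t + w k a d t' := by exact_mod_cast hwsum.symm
    have h2 : ((F : ℤ) + a) = w k a d (a - 1) := by exact_mod_cast hwF.symm
    have hNge : w k a d t' ≤ N := by
      have : (w k a d t' : ℤ) ≤ N := by omega
      exact_mod_cast this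
    have hwc' := w_class k a d t'
    have hdvd' : (a : ℤ) ∣ (N : ℤ) - t' * d := by
      have e : (N : ℤ) - t' * d =
          ((w k a d t : ℤ) - n) + ((w k a d t' : ℤ) - t' * d) + (-1) * a := by
        omega
      rw [e]
      exact dvd_add (dvd_add hdiff hwc') ⟨-1, by ring⟩
    have hNH : N ∈ H := (mem_crit k a d hk0 ha0 hcop N t' (by omega) hdvd').mpr hNge
    exact ⟨N, hNH, hNz⟩

end Stmt3aux

open Stmt3aux

/-- a numerical semigroup generated by an arithmetic sequence
`a, a+d, …, a+(e-1)d` with `gcd(a,d) = 1`, `2 < e ≤ a`, is symmetric iff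
`a ≡ 2 (mod e-1)`. -/
theorem stmt_3 (e a d : ℕ) (he : 2 < e) (hcop : Nat.Coprime a d) (hea : e ≤ a)
    (H : Set ℕ) (hH : H = genBy {x : ℕ | ∃ i < e, x = a + i * d}) :
    IsSymmetric H ↔ a ≡ 2 [MOD e - 1] := by
  obtain ⟨k, rfl⟩ : ∃ k, e = k + 1 := ⟨e - 1, by omega⟩
  have hk : 2 ≤ k := by omega
  subst hH
  rw [main k a d hk (by omega) hcop]
  have hmod : k + 1 - 1 = k := by omega
  rw [hmod]
  constructor
  · intro h
    exact ((Nat.modEq_iff_dvd' (by omega : 2 ≤ a)).mpr (Nat.dvd_of_mod_eq_zero h)).symm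
  · intro h
    obtain ⟨m, hm⟩ := (Nat.modEq_iff_dvd' (by omega : 2 ≤ a)).mp h.symm
    rw [hm, Nat.mul_mod_right]
end

section
/- Let e > 2 and let a, d be coprime nonnegative integers with e ≤ a, and let H be the numerical semigroup generated by the arithmetic sequence a, a+d, a+2d, …, a+(e−1)d. Then H is almost symmetric if and only if a = e or a ≡ 2 (mod e−1). -/
open NumSgp

/-- `H` is almost symmetric: writing `PF(H) = {f 1 < f 2 < … < f τ}`, one has
`f i + f (τ - i) = Fr(H)` for `i = 1, …, ⌊τ/2⌋`. -/
noncomputable def AlmostSymmetric (H : Set ℕ) : Prop :=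
  ∃ (τ : ℕ) (f : ℕ → ℤ), 0 < τ ∧
    (∀ i j : ℕ, 1 ≤ i → i < j → j ≤ τ → f i < f j) ∧
    pseudoFrob H = f '' Set.Icc 1 τ ∧
    ∀ i : ℕ, 1 ≤ i → i ≤ τ / 2 → f i + f (τ - i) = frob H

lemma mem_genBy_iff {e a d : ℕ} (he : 2 < e) (x : ℕ) :
    x ∈ genBy {x : ℕ | ∃ i < e, x = a + i * d} ↔
      ∃ l m : ℕ, m ≤ l * (e - 1) ∧ x = l * a + m * d := by
  constructor
  · intro hx
    induction hx using AddSubmonoid.closure_induction with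
    | mem g hg =>
      obtain ⟨i, hi, rfl⟩ := hg
      exact ⟨1, i, by omega, by ring⟩
    | zero => exact ⟨0, 0, by omega, by ring⟩
    | add x y _ _ hx hy =>
      obtain ⟨l1, m1, h1, rfl⟩ := hx
      obtain ⟨l2, m2, h2, rfl⟩ := hy
      exact ⟨l1 + l2, m1 + m2, by nlinarith, by ring⟩
  · rintro ⟨l, m, hm, rfl⟩
    induction l generalizing m with
    | zero =>
      have : m = 0 := by omega
      subst this
      simpa [genBy] using (AddSubmonoid.closure {x : ℕ | ∃ i < e, x = a + i * d}).zero_mem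
    | succ l ih =>
      set i := min m (e - 1) with hi
      have him : i ≤ m := min_le_left _ _
      have h1 : m - i ≤ l * (e - 1) := by
        rcases le_or_gt m (e - 1) with h | h
        · simp [hi, min_eq_left h]
        · have hie : i = e - 1 := min_eq_right (le_of_lt h)
          have hsm : (l + 1) * (e - 1) = l * (e - 1) + (e - 1) := Nat.succ_mul _ _
          omega
      have hgen : (a + i * d) ∈ genBy {x : ℕ | ∃ i < e, x = a + i * d} :=
        AddSubmonoid.subset_closure ⟨i, by omega, rfl⟩
      have hrec := ih (m - i) h1
      have : (l + 1) * a + m * d = (a + i * d) + (l * a + (m - i) * d) := by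
        have : m * d = i * d + (m - i) * d := by
          rw [← Nat.add_mul]; congr 1; omega
        rw [this]; ring
      rw [this]
      exact (AddSubmonoid.closure _).add_mem hgen hrec

lemma memZ_iff {e a d : ℕ} (he : 2 < e) (z : ℤ) :
    memZ (genBy {x : ℕ | ∃ i < e, x = a + i * d}) z ↔
      ∃ l m : ℕ, m ≤ l * (e - 1) ∧ z = l * a + m * d := by
  constructor
  · rintro ⟨n, hn, rfl⟩
    obtain ⟨l, m, h1, rfl⟩ := (mem_genBy_iff he n).1 hn
    exact ⟨l, m, h1, by push_cast; ring⟩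
  · rintro ⟨l, m, h1, rfl⟩
    exact ⟨l * a + m * d, (mem_genBy_iff he _).2 ⟨l, m, h1, rfl⟩, by push_cast; ring⟩

-- Lemma C: if m < a and L*(e-1) < m then L*a + m*d is not in H.
lemma notMemZ {e a d : ℕ} (he : 2 < e) (hcop : Nat.Coprime a d) (L m : ℕ)
    (hma : m < a) (hL : L * (e - 1) < m) :
    ¬ memZ (genBy {x : ℕ | ∃ i < e, x = a + i * d}) ((L : ℤ) * a + m * d) := by
  rw [memZ_iff he]
  rintro ⟨l', m', hle, heq⟩
  have hco : IsCoprime (a : ℤ) (d : ℤ) := Nat.isCoprime_iff_coprime.2 hcop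
  have hdvd : (a : ℤ) ∣ ((m' : ℤ) - m) * d := ⟨(L : ℤ) - l', by linarith [heq]⟩
  obtain ⟨t, ht⟩ := hco.dvd_of_dvd_mul_right hdvd
  have ha0 : (0:ℤ) < a := by exact_mod_cast Nat.lt_of_le_of_lt (Nat.zero_le m) hma
  rcases le_or_gt 0 t with htpos | htneg
  · have h2 : ((L : ℤ) - l') * a = (t * d) * a := by linear_combination heq + (d:ℤ) * ht
    have h3 : (L : ℤ) - l' = t * d := mul_right_cancel₀ ha0.ne' h2
    have hld : (l' : ℤ) ≤ L := by nlinarith [Int.natCast_nonneg d]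
    have h4 : (m' : ℤ) ≤ (l' : ℤ) * ((e - 1 : ℕ) : ℤ) := by exact_mod_cast hle
    have h5 : (l' : ℤ) * ((e - 1 : ℕ) : ℤ) ≤ (L : ℤ) * ((e - 1 : ℕ) : ℤ) :=
      mul_le_mul_of_nonneg_right hld (Int.natCast_nonneg _)
    have h6 : (L : ℤ) * ((e - 1 : ℕ) : ℤ) < m := by exact_mod_cast hL
    have hmm : (m : ℤ) ≤ m' := by nlinarith
    linarith
  · have : (m' : ℤ) < 0 := by nlinarith
    exact absurd this (Int.natCast_nonneg m').not_gt

-- every integer above F = q*a + (a-1)*d is in H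
lemma memZ_of_gt {e a d q r : ℕ} (he : 2 < e) (hcop : Nat.Coprime a d)
    (hqr : a = q * (e - 1) + r + 2) (hr : r < e - 1) (z : ℤ)
    (hz : (q : ℤ) * a + ((a : ℤ) - 1) * d < z) :
    memZ (genBy {x : ℕ | ∃ i < e, x = a + i * d}) z := by
  have ha2 : 2 ≤ a := by omega
  haveI : NeZero a := ⟨by omega⟩
  set u : (ZMod a)ˣ := ZMod.unitOfCoprime d hcop.symm with hu
  set m : ℕ := (((u⁻¹ : (ZMod a)ˣ) : ZMod a) * (z : ZMod a)).val with hm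
  have hma : m < a := ZMod.val_lt _
  have hcast : ((m : ℕ) : ZMod a) = ((u⁻¹ : (ZMod a)ˣ) : ZMod a) * (z : ZMod a) := by
    rw [hm, ZMod.natCast_val, ZMod.cast_id]
  have hud : ((u : (ZMod a)ˣ) : ZMod a) = (d : ZMod a) := ZMod.coe_unitOfCoprime d hcop.symm
  have hdvd : (a : ℤ) ∣ z - (m : ℤ) * d := by
    rw [← ZMod.intCast_zmod_eq_zero_iff_dvd]
    push_cast
    rw [hcast, ← hud]
    rw [mul_assoc]
    rw [mul_comm (z : ZMod a)]
    rw [← mul_assoc]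
    simp
  obtain ⟨l, hl⟩ := hdvd
  have hz' : z = (a : ℤ) * l + m * d := by linarith
  have hql : (q : ℤ) < l := by
    have h1 : ((a:ℤ) - 1 - m) * d ≥ 0 := by
      apply mul_nonneg _ (Int.natCast_nonneg d)
      have : (m:ℤ) < a := by exact_mod_cast hma
      linarith
    nlinarith [hz]
  have hl0 : (0:ℤ) ≤ l := by
    have : (0:ℤ) ≤ q := Int.natCast_nonneg q
    linarith
  have hltn : (q + 1 : ℕ) ≤ l.toNat := by
    have : ((q:ℤ) + 1) ≤ l := by linarith
    omega
  rw [memZ_iff he]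
  refine ⟨l.toNat, m, ?_, ?_⟩
  · have h1 : m ≤ q * (e - 1) + (e - 1) := by omega
    calc m ≤ (q + 1) * (e - 1) := by rw [add_mul]; omega
    _ ≤ l.toNat * (e - 1) := Nat.mul_le_mul_right _ hltn
  · rw [hz']
    have : ((l.toNat : ℤ)) = l := Int.toNat_of_nonneg hl0
    rw [this]; ring

lemma frob_eq {e a d q r : ℕ} (he : 2 < e) (hcop : Nat.Coprime a d)
    (hqr : a = q * (e - 1) + r + 2) (hr : r < e - 1) :
    frob (genBy {x : ℕ | ∃ i < e, x = a + i * d}) = (q : ℤ) * a + ((a : ℤ) - 1) * d := by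
  set H := genBy {x : ℕ | ∃ i < e, x = a + i * d} with hH
  set F : ℤ := (q : ℤ) * a + ((a : ℤ) - 1) * d with hF
  have hFmem : ¬ memZ H F := by
    have := notMemZ (a := a) (d := d) he hcop q (a - 1) (by omega) (by omega)
    have hc : ((a - 1 : ℕ) : ℤ) = (a : ℤ) - 1 := by
      have : 1 ≤ a := by omega
      push_cast [this]; ring
    rwa [hc] at this
  have hub : ∀ z ∈ {z : ℤ | ¬ memZ H z}, z ≤ F := by
    intro z hz
    by_contra hgt
    exact hz (memZ_of_gt he hcop hqr hr z (by omega))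
  apply le_antisymm
  · exact csSup_le ⟨F, hFmem⟩ hub
  · exact le_csSup ⟨F, hub⟩ hFmem

lemma pf_eq {e a d q r : ℕ} (he : 2 < e) (hcop : Nat.Coprime a d) (hea : e ≤ a)
    (hqr : a = q * (e - 1) + r + 2) (hr : r < e - 1) :
    pseudoFrob (genBy {x : ℕ | ∃ i < e, x = a + i * d}) =
      (fun i : ℕ => (q : ℤ) * a + ((q * (e - 1) + i : ℕ) : ℤ) * d) '' Set.Icc 1 (r + 1) := by
  set A : Set ℕ := {x : ℕ | ∃ i < e, x = a + i * d} with hA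
  set H := genBy A with hH
  apply Set.eq_of_subset_of_subset
  · -- pseudoFrob ⊆ image
    rintro f ⟨hf1, hf2⟩
    have haH : a ∈ H := (mem_genBy_iff he a).2 ⟨1, 0, by omega, by ring⟩
    obtain ⟨l, μ, hlμ, heq⟩ := (memZ_iff he _).1 (hf2 a haH (by omega))
    have ha2 : 2 ≤ a := by omega
    -- reduce μ modulo a
    obtain ⟨l₀, μ₀, hμ₀a, hle0, heq0⟩ :
        ∃ l₀ μ₀ : ℕ, μ₀ < a ∧ μ₀ ≤ l₀ * (e - 1) ∧ f + (a : ℤ) = (l₀ : ℤ) * a + μ₀ * d := by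
      obtain ⟨c, μ₀, hcm, hμ₀a⟩ : ∃ c μ₀, μ = a * c + μ₀ ∧ μ₀ < a :=
        ⟨μ / a, μ % a, (Nat.div_add_mod μ a).symm, Nat.mod_lt _ (by omega)⟩
      refine ⟨l + d * c, μ₀, hμ₀a, ?_, ?_⟩
      · have h1 : l * (e - 1) ≤ (l + d * c) * (e - 1) := Nat.mul_le_mul_right _ (by omega)
        omega
      · rw [heq]
        have hμc : (μ : ℤ) = (a : ℤ) * c + μ₀ := by exact_mod_cast hcm
        push_cast
        linear_combination (d : ℤ) * hμc
    have hfval : f = (l₀ : ℤ) * a + μ₀ * d - a := by linarith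
    -- l₀ ≥ 1
    have hl₀1 : 1 ≤ l₀ := by
      by_contra h
      have hl00 : l₀ = 0 := by omega
      rw [hl00] at hle0
      simp at hle0
      have hfa : f = -(a : ℤ) := by rw [hfval, hl00, hle0]; push_cast; ring
      have hnH : (a + (e - 1) * d) ∈ H := (mem_genBy_iff he _).2 ⟨1, e - 1, by omega, by ring⟩
      have := hf2 _ hnH (by omega)
      have hval : f + ((a + (e - 1) * d : ℕ) : ℤ) = (0 : ℤ) * a + ((e - 1 : ℕ) : ℤ) * d := by
        rw [hfa]; push_cast; ring
      rw [hval] at this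
      exact notMemZ he hcop 0 (e - 1) (by omega) (by omega) this
    -- μ₀ > (l₀ - 1)*(e-1)
    have hkey : (l₀ - 1) * (e - 1) < μ₀ := by
      by_contra h
      push_neg at h
      apply hf1
      rw [memZ_iff he]
      refine ⟨l₀ - 1, μ₀, h, ?_⟩
      rw [hfval]
      have : ((l₀ - 1 : ℕ) : ℤ) = (l₀ : ℤ) - 1 := by omega
      rw [this]; ring
    have hmulsplit : l₀ * (e - 1) = (l₀ - 1) * (e - 1) + (e - 1) := by
      obtain ⟨l₁, rfl⟩ : ∃ l₁, l₀ = l₁ + 1 := ⟨l₀ - 1, by omega⟩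
      simp [Nat.add_mul]
    -- μ₀ > q*(e-1)
    have hμbig : q * (e - 1) < μ₀ := by
      by_contra h
      push_neg at h
      rcases le_or_gt (μ₀ + (e - 1)) (a - 1) with hcase | hcase
      · -- use n = a + (e-1) d
        have hnH : (a + (e - 1) * d) ∈ H := (mem_genBy_iff he _).2 ⟨1, e - 1, by omega, by ring⟩
        have hmem := hf2 _ hnH (by omega)
        have hval : f + ((a + (e - 1) * d : ℕ) : ℤ) = (l₀ : ℤ) * a + ((μ₀ + (e - 1) : ℕ) : ℤ) * d := by
          rw [hfval]; push_cast; ring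
        rw [hval] at hmem
        exact notMemZ he hcop l₀ (μ₀ + (e - 1)) (by omega) (by omega) hmem
      · -- use n = a + (a-1-μ₀) d
        set j := a - 1 - μ₀ with hj
        have hj1 : 1 ≤ j := by omega
        have hje : j < e := by omega
        have hnH : (a + j * d) ∈ H := (mem_genBy_iff he _).2 ⟨1, j, by omega, by ring⟩
        have hmem := hf2 _ hnH (by omega)
        have hμj : μ₀ + j = a - 1 := by omega
        have hval : f + ((a + j * d : ℕ) : ℤ) = (l₀ : ℤ) * a + ((a - 1 : ℕ) : ℤ) * d := by
          rw [hfval]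
          have h1 : ((a - 1 : ℕ) : ℤ) = (μ₀ : ℤ) + j := by omega
          rw [h1]; push_cast; ring
        rw [hval] at hmem
        -- l₀ ≤ q
        have hl₀q : l₀ ≤ q := by
          have h1 : (l₀ - 1) * (e - 1) < q * (e - 1) := by omega
          have h2 : l₀ - 1 < q := Nat.lt_of_mul_lt_mul_right h1
          omega
        have h3 : l₀ * (e - 1) ≤ q * (e - 1) := Nat.mul_le_mul_right _ hl₀q
        exact notMemZ he hcop l₀ (a - 1) (by omega) (by omega) hmem
    -- now conclude: l₀ = q + 1, μ₀ = q*(e-1) + i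
    have hl₀eq : l₀ = q + 1 := by
      have h1 : q * (e - 1) < l₀ * (e - 1) := by omega
      have h2 : q < l₀ := Nat.lt_of_mul_lt_mul_right h1
      have h3 : (l₀ - 1) * (e - 1) < (q + 1) * (e - 1) := by
        have : (q + 1) * (e - 1) = q * (e - 1) + (e - 1) := by rw [Nat.add_mul]; omega
        omega
      have h4 : l₀ - 1 < q + 1 := Nat.lt_of_mul_lt_mul_right h3
      omega
    refine ⟨μ₀ - q * (e - 1), ⟨by omega, by omega⟩, ?_⟩
    have hμrw : q * (e - 1) + (μ₀ - q * (e - 1)) = μ₀ := by omega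
    simp only [hμrw]
    rw [hfval, hl₀eq]; push_cast; ring
  · -- image ⊆ pseudoFrob
    rintro z ⟨i, ⟨hi1, hi2⟩, rfl⟩
    constructor
    · exact notMemZ he hcop q (q * (e - 1) + i) (by omega) (by omega)
    · intro n hn hn0
      obtain ⟨l, μ, hlμ, rfl⟩ := (mem_genBy_iff he n).1 hn
      have hl1 : 1 ≤ l := by
        rcases Nat.eq_zero_or_pos l with h | h
        · exfalso; apply hn0; subst h; simp at hlμ; subst hlμ; omega
        · exact h
      rw [memZ_iff he]
      rcases le_or_gt (i + μ) (l * (e - 1)) with hcase | hcase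
      · refine ⟨q + l, q * (e - 1) + i + μ, ?_, by push_cast; ring⟩
        have : (q + l) * (e - 1) = q * (e - 1) + l * (e - 1) := Nat.add_mul _ _ _
        omega
      · refine ⟨q + l + d, q * (e - 1) + i + μ - a, ?_, ?_⟩
        · have h1 : l * (e - 1) ≤ (q + l + d) * (e - 1) := Nat.mul_le_mul_right _ (by omega)
          omega
        · have hsub : a ≤ q * (e - 1) + i + μ := by
            have : e - 1 ≤ l * (e - 1) := by
              calc e - 1 = 1 * (e - 1) := (Nat.one_mul _).symm
              _ ≤ l * (e - 1) := Nat.mul_le_mul_right _ hl1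
            omega
          have hc : ((q * (e - 1) + i + μ - a : ℕ) : ℤ) = (q * (e-1) + i + μ : ℕ) - (a:ℤ) := by
            omega
          push_cast [hc]
          ring

/-- a numerical semigroup generated by an arithmetic sequence
`a, a+d, …, a+(e-1)d` with `gcd(a,d) = 1`, `2 < e ≤ a`, is almost symmetric iff
`a = e` or `a ≡ 2 (mod e-1)`. -/
theorem stmt_4 (e a d : ℕ) (he : 2 < e) (hcop : Nat.Coprime a d) (hea : e ≤ a)
    (H : Set ℕ) (hH : H = genBy {x : ℕ | ∃ i < e, x = a + i * d}) :
    AlmostSymmetric H ↔ (a = e ∨ a ≡ 2 [MOD e - 1]) := by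
  subst hH
  obtain ⟨q, r, hr, hqr, hmodiff⟩ :
      ∃ q r, r < e - 1 ∧ a = q * (e - 1) + r + 2 ∧ ((a ≡ 2 [MOD e - 1]) ↔ r = 0) := by
    refine ⟨(a - 2) / (e - 1), (a - 2) % (e - 1), Nat.mod_lt _ (by omega), ?_, ?_⟩
    · have h := Nat.div_add_mod (a - 2) (e - 1)
      have hc : (e - 1) * ((a - 2) / (e - 1)) = ((a - 2) / (e - 1)) * (e - 1) := mul_comm _ _
      omega
    · constructor
      · intro h
        obtain ⟨t, ht⟩ := (Nat.modEq_iff_dvd' (show 2 ≤ a by omega)).1 h.symm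
        rw [ht, Nat.mul_mod_right]
      · intro h
        have hdvd : (e - 1) ∣ a - 2 := Nat.dvd_of_mod_eq_zero h
        exact ((Nat.modEq_iff_dvd' (show 2 ≤ a by omega)).2 hdvd).symm
  have hd : 1 ≤ d := by
    rcases Nat.eq_zero_or_pos d with h | h
    · exfalso; rw [h, Nat.coprime_zero_right] at hcop; omega
    · exact h
  have hpf := pf_eq (q := q) (r := r) he hcop hea hqr hr
  have hfrob := frob_eq (q := q) (r := r) (d := d) he hcop hqr hr
  have haeiff : a = e ↔ q = 0 := by
    constructor
    · intro h
      by_contra hq0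
      have h1 : 1 ≤ q := by omega
      have h2 : e - 1 ≤ q * (e - 1) := Nat.le_mul_of_pos_left _ h1
      omega
    · intro h
      have : q * (e - 1) = 0 := by rw [h]; ring
      omega
  rw [hmodiff, haeiff]
  constructor
  · -- almost symmetric → q = 0 ∨ r = 0
    rintro ⟨τ, f, hτ, hmono, himg, hsym⟩
    by_cases hr0 : r = 0
    · exact Or.inr hr0
    left
    by_contra hq0
    have hq1 : 1 ≤ q := by omega
    set g : ℕ → ℤ := fun i : ℕ => (q : ℤ) * a + ((q * (e - 1) + i : ℕ) : ℤ) * d with hg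
    have hgmem : ∀ i : ℕ, 1 ≤ i → i ≤ r + 1 → g i ∈ f '' Set.Icc 1 τ := by
      intro i h1 h2
      rw [← himg, hpf]
      exact ⟨i, ⟨h1, h2⟩, rfl⟩
    have hτ2 : 2 ≤ τ := by
      by_contra hτ1
      have hτeq : τ = 1 := by omega
      obtain ⟨i₁, hi₁, he₁⟩ := hgmem 1 le_rfl (by omega)
      obtain ⟨i₂, hi₂, he₂⟩ := hgmem 2 (by omega) (by omega)
      have hii : i₁ = 1 ∧ i₂ = 1 := by
        simp only [hτeq, Set.mem_Icc] at hi₁ hi₂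
        omega
      rw [hii.1] at he₁; rw [hii.2] at he₂
      have hgg : g 1 = g 2 := by rw [← he₁, ← he₂]
      simp only [hg] at hgg
      have h1 : ((q * (e - 1) + 1 : ℕ) : ℤ) * d = ((q * (e - 1) + 2 : ℕ) : ℤ) * d := by linarith
      have hdz : (1 : ℤ) ≤ d := by exact_mod_cast hd
      have h2 : ((q * (e - 1) + 1 : ℕ) : ℤ) < ((q * (e - 1) + 2 : ℕ) : ℤ) := by
        exact_mod_cast (by omega : q * (e - 1) + 1 < q * (e - 1) + 2)
      nlinarith
    have hs := hsym 1 le_rfl (by omega)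
    have hf1 : f 1 ∈ pseudoFrob (genBy {x : ℕ | ∃ i < e, x = a + i * d}) := by
      rw [himg]; exact ⟨1, ⟨le_rfl, by omega⟩, rfl⟩
    have hf2 : f (τ - 1) ∈ pseudoFrob (genBy {x : ℕ | ∃ i < e, x = a + i * d}) := by
      rw [himg]; exact ⟨τ - 1, ⟨by omega, by omega⟩, rfl⟩
    rw [hpf] at hf1 hf2
    obtain ⟨i₁, ⟨hi₁1, hi₁2⟩, hie₁⟩ := hf1
    obtain ⟨i₂, ⟨hi₂1, hi₂2⟩, hie₂⟩ := hf2
    rw [← hie₁, ← hie₂] at hs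
    rw [hfrob] at hs
    simp only [hg] at hs
    have haZ : (a : ℤ) = (q : ℤ) * ((e - 1 : ℕ) : ℤ) + r + 2 := by exact_mod_cast hqr
    have hE : (q : ℤ) * a + ((q : ℤ) * ((e - 1 : ℕ) : ℤ) + i₁ + i₂ - (r + 1)) * d = 0 := by
      have h1 : ((q * (e - 1) + i₁ : ℕ) : ℤ) = (q : ℤ) * ((e - 1 : ℕ) : ℤ) + i₁ := by
        push_cast; ring
      have h2 : ((q * (e - 1) + i₂ : ℕ) : ℤ) = (q : ℤ) * ((e - 1 : ℕ) : ℤ) + i₂ := by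
        push_cast; ring
      rw [h1, h2] at hs
      linear_combination hs + (d : ℤ) * haZ
    have hqZ : (1 : ℤ) ≤ q := by exact_mod_cast hq1
    have hdZ : (1 : ℤ) ≤ d := by exact_mod_cast hd
    have haZ3 : (3 : ℤ) ≤ a := by exact_mod_cast (show 3 ≤ a by omega)
    have hrK : ((r : ℤ)) + 1 ≤ ((e - 1 : ℕ) : ℤ) := by
      exact_mod_cast (show r + 1 ≤ e - 1 by omega)
    have hKq : ((e - 1 : ℕ) : ℤ) ≤ (q : ℤ) * ((e - 1 : ℕ) : ℤ) :=
      le_mul_of_one_le_left (by positivity) hqZ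
    have hi₁Z : (1 : ℤ) ≤ i₁ := by exact_mod_cast hi₁1
    have hi₂Z : (1 : ℤ) ≤ i₂ := by exact_mod_cast hi₂1
    have hpos : (0 : ℤ) ≤ (q : ℤ) * ((e - 1 : ℕ) : ℤ) + i₁ + i₂ - (r + 1) := by linarith
    have hqa : (a : ℤ) ≤ (q : ℤ) * a := le_mul_of_one_le_left (by positivity) hqZ
    have hXd := mul_nonneg hpos (show (0:ℤ) ≤ (d:ℤ) by positivity)
    linarith [hE, hXd, hqa, haZ3]
  · -- q = 0 ∨ r = 0 → almost symmetric
    intro hor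
    by_cases hr0 : r = 0
    · refine ⟨1, fun i : ℕ => (q : ℤ) * a + ((q * (e - 1) + i : ℕ) : ℤ) * d, one_pos,
        ?_, ?_, ?_⟩
      · intro i j h1 h2 h3
        exact absurd h1 (by omega)
      · rw [hpf, hr0]
      · intro i h1 h2
        exact absurd h1 (by omega)
    · have hq0 : q = 0 := by tauto
      refine ⟨r + 1, fun i : ℕ => (q : ℤ) * a + ((q * (e - 1) + i : ℕ) : ℤ) * d, by omega,
        ?_, hpf, ?_⟩
      · intro i j h1 h2 h3
        have hlt : ((q * (e - 1) + i : ℕ) : ℤ) < ((q * (e - 1) + j : ℕ) : ℤ) := by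
          exact_mod_cast (by omega : q * (e - 1) + i < q * (e - 1) + j)
        have hdZ : (0 : ℤ) < d := by exact_mod_cast hd
        show (q : ℤ) * a + ((q * (e - 1) + i : ℕ) : ℤ) * d <
          (q : ℤ) * a + ((q * (e - 1) + j : ℕ) : ℤ) * d
        exact add_lt_add_right (mul_lt_mul_of_pos_right hlt hdZ) _
      · intro i h1 h2
        rw [hfrob]
        have h3 : q * (e - 1) = 0 := by rw [hq0]; ring
        have ha1 : ((a : ℤ) - 1) =
            ((q * (e - 1) + i : ℕ) : ℤ) + ((q * (e - 1) + (r + 1 - i) : ℕ) : ℤ)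
            - ((q * (e - 1) : ℕ) : ℤ) := by
          have h4 : i ≤ r + 1 := by omega
          omega
        have hq0' : (q : ℤ) = 0 := by exact_mod_cast hq0
        rw [ha1, hq0']
        push_cast [h3]
        ring
end

section
/- Let H be a numerical semigroup minimally generated by n₁, n₂, n₃ which is not symmetric, and let a₁,a₂,a₃,b₁,b₂,b₃ be positive integers such that, setting cᵢ = aᵢ + bᵢ, one has c₁n₁ = b₂n₂ + a₃n₃, c₂n₂ = a₁n₁ + b₃n₃, c₃n₃ = b₁n₁ + a₂n₂, and each cᵢ is the smallest positive integer c with c·nᵢ in the submonoid generated by the other two of n₁,n₂,n₃. Then n₁ = a₂a₃ + b₂a₃ + b₂b₃, n₂ = a₁a₃ + a₁b₃ + b₁b₃, and n₃ = a₁a₂ + b₁a₂ + b₁b₂. -/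
open NumSgp

section Aux

lemma mem_genBy_pair (x y u v : ℕ) : u * x + v * y ∈ genBy {x, y} := by
  have hx : x ∈ AddSubmonoid.closure ({x, y} : Set ℕ) :=
    AddSubmonoid.subset_closure (by simp)
  have hy : y ∈ AddSubmonoid.closure ({x, y} : Set ℕ) :=
    AddSubmonoid.subset_closure (by simp)
  simpa [genBy, smul_eq_mul] using add_mem (nsmul_mem hx u) (nsmul_mem hy v)

lemma genBy_triple_elim {x y z m : ℕ} (h : m ∈ genBy {x, y, z}) :
    ∃ α β γ : ℕ, m = α * x + β * y + γ * z := by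
  let S : AddSubmonoid ℕ :=
    { carrier := {m | ∃ α β γ : ℕ, m = α * x + β * y + γ * z}
      zero_mem' := ⟨0, 0, 0, by ring⟩
      add_mem' := by
        rintro a b ⟨α, β, γ, rfl⟩ ⟨α', β', γ', rfl⟩
        exact ⟨α + α', β + β', γ + γ', by ring⟩ }
  have hsub : ({x, y, z} : Set ℕ) ⊆ S := by
    rintro t ht
    simp only [Set.mem_insert_iff, Set.mem_singleton_iff] at ht
    rcases ht with rfl | rfl | rfl
    · exact ⟨1, 0, 0, by ring⟩
    · exact ⟨0, 1, 0, by ring⟩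
    · exact ⟨0, 0, 1, by ring⟩
  exact AddSubmonoid.closure_le.mpr hsub h

lemma genBy_insert_zero (A : Set ℕ) : genBy (insert 0 A) = genBy A := by
  unfold genBy
  rw [Set.insert_eq, AddSubmonoid.closure_union, AddSubmonoid.closure_singleton_zero,
    bot_sup_eq]

lemma modeq_add_mul (a c n : ℕ) : a ≡ a + c * n [MOD n] := by
  conv_lhs => rw [← Nat.add_zero a]
  exact Nat.ModEq.add_left a (Nat.modEq_zero_iff_dvd.mpr (dvd_mul_left n c)).symm

/-- Reduction lemma: every pair `(lam, mu)` can be reduced, modulo `n₁`, to a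
pair in the fundamental staircase region. -/
lemma reduce_aux (n₁ n₂ n₃ a₁ a₂ a₃ b₁ b₂ b₃ : ℕ)
    (hn₁ : 0 < n₁) (ha₁ : 0 < a₁) (hb₁ : 0 < b₁)
    (h1 : (a₁ + b₁) * n₁ = b₂ * n₂ + a₃ * n₃)
    (h2 : (a₂ + b₂) * n₂ = a₁ * n₁ + b₃ * n₃)
    (h3 : (a₃ + b₃) * n₃ = b₁ * n₁ + a₂ * n₂) :
    ∀ v lam mu : ℕ, lam * n₂ + mu * n₃ = v →
      ∃ lam' mu' : ℕ,
        ((lam' < a₂ + b₂ ∧ mu' < a₃) ∨ (lam' < b₂ ∧ a₃ ≤ mu' ∧ mu' < a₃ + b₃)) ∧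
        lam' * n₂ + mu' * n₃ ≡ lam * n₂ + mu * n₃ [MOD n₁] := by
  intro v
  induction v using Nat.strong_induction_on with
  | _ v ih =>
    intro lam mu hv
    by_cases hc : (lam < a₂ + b₂ ∧ mu < a₃) ∨ (lam < b₂ ∧ a₃ ≤ mu ∧ mu < a₃ + b₃)
    · exact ⟨lam, mu, hc, Nat.ModEq.refl _⟩
    rcases le_or_gt (a₂ + b₂) lam with hcase | hlam
    · -- lam ≥ a₂+b₂ : use the relation h2
      obtain ⟨l, rfl⟩ := Nat.exists_eq_add_of_le hcase
      have heq : (a₂ + b₂ + l) * n₂ + mu * n₃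
          = (l * n₂ + (mu + b₃) * n₃) + a₁ * n₁ := by
        rw [add_mul, h2]; ring
      have hlt : l * n₂ + (mu + b₃) * n₃ < v := by
        rw [← hv, heq]
        exact Nat.lt_add_of_pos_right (Nat.mul_pos ha₁ hn₁)
      obtain ⟨lam', mu', hR, hcong⟩ := ih _ hlt l (mu + b₃) rfl
      refine ⟨lam', mu', hR, hcong.trans ?_⟩
      rw [heq]
      exact modeq_add_mul _ _ _
    rcases le_or_gt (a₃ + b₃) mu with hcase2 | hmu
    · -- mu ≥ a₃+b₃ : use the relation h3
      obtain ⟨m, rfl⟩ := Nat.exists_eq_add_of_le hcase2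
      have heq : lam * n₂ + (a₃ + b₃ + m) * n₃
          = ((lam + a₂) * n₂ + m * n₃) + b₁ * n₁ := by
        rw [add_mul (a₃ + b₃), h3]; ring
      have hlt : (lam + a₂) * n₂ + m * n₃ < v := by
        rw [← hv, heq]
        exact Nat.lt_add_of_pos_right (Nat.mul_pos hb₁ hn₁)
      obtain ⟨lam', mu', hR, hcong⟩ := ih _ hlt (lam + a₂) m rfl
      refine ⟨lam', mu', hR, hcong.trans ?_⟩
      rw [heq]
      exact modeq_add_mul _ _ _
    · -- lam < a₂+b₂, mu < a₃+b₃, not in region : b₂ ≤ lam and a₃ ≤ mu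
      have hba : b₂ ≤ lam ∧ a₃ ≤ mu := by omega
      obtain ⟨l, rfl⟩ := Nat.exists_eq_add_of_le hba.1
      obtain ⟨m, rfl⟩ := Nat.exists_eq_add_of_le hba.2
      have heq : (b₂ + l) * n₂ + (a₃ + m) * n₃
          = (l * n₂ + m * n₃) + (a₁ + b₁) * n₁ := by
        rw [h1, add_mul, add_mul]; ring
      have hlt : l * n₂ + m * n₃ < v := by
        rw [← hv, heq]
        exact Nat.lt_add_of_pos_right (Nat.mul_pos (by omega) hn₁)
      obtain ⟨lam', mu', hR, hcong⟩ := ih _ hlt l m rfl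
      refine ⟨lam', mu', hR, hcong.trans ?_⟩
      rw [heq]
      exact modeq_add_mul _ _ _

set_option maxHeartbeats 1000000 in
/-- Injectivity (half): distinct staircase pairs have distinct values mod `n₁`. -/
lemma inj_aux (n₁ n₂ n₃ a₁ a₂ a₃ b₁ b₂ b₃ : ℕ)
    (hn₁ : 0 < n₁) (hn₂ : 0 < n₂) (hn₃ : 0 < n₃)
    (h1 : (a₁ + b₁) * n₁ = b₂ * n₂ + a₃ * n₃)
    (hmin1 : ∀ c : ℕ, 0 < c → c * n₁ ∈ genBy {n₂, n₃} → a₁ + b₁ ≤ c)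
    (hmin2 : ∀ c : ℕ, 0 < c → c * n₂ ∈ genBy {n₁, n₃} → a₂ + b₂ ≤ c)
    (hmin3 : ∀ c : ℕ, 0 < c → c * n₃ ∈ genBy {n₁, n₂} → a₃ + b₃ ≤ c)
    (lam mu lam' mu' : ℕ)
    (hl : lam < a₂ + b₂) (hm : mu < a₃ + b₃) (hRl : a₃ ≤ mu → lam < b₂)
    (hl' : lam' < a₂ + b₂) (hm' : mu' < a₃ + b₃)
    (hle : lam' ≤ lam)
    (k : ℤ)
    (hk : (lam : ℤ) * n₂ + mu * n₃ = lam' * n₂ + mu' * n₃ + k * n₁) :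
    lam = lam' ∧ mu = mu' := by
  have hn₁' : (0:ℤ) < n₁ := by exact_mod_cast hn₁
  have hn₂' : (0:ℤ) < n₂ := by exact_mod_cast hn₂
  have hn₃' : (0:ℤ) < n₃ := by exact_mod_cast hn₃
  obtain ⟨x, rfl⟩ : ∃ x, lam = lam' + x := ⟨lam - lam', by omega⟩
  push_cast at hk
  rcases Nat.eq_zero_or_pos x with rfl | hx
  · refine ⟨by omega, ?_⟩
    rcases lt_trichotomy mu mu' with hmm | hmm | hmm
    · exfalso
      obtain ⟨e, rfl⟩ : ∃ e, mu' = mu + (e + 1) := ⟨mu' - mu - 1, by omega⟩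
      push_cast at hk hm'
      have key : ((e : ℤ) + 1) * n₃ + k * n₁ = 0 := by linear_combination -hk
      have hkneg : k < 0 := by
        by_contra hge
        push_neg at hge
        have h1' : (0:ℤ) ≤ k * n₁ := mul_nonneg hge hn₁'.le
        have h2' : (0:ℤ) < ((e:ℤ) + 1) * n₃ := by positivity
        linarith
      obtain ⟨k₂, hk₂⟩ : ∃ k₂ : ℕ, (k₂ : ℤ) = -k := ⟨(-k).toNat, Int.toNat_of_nonneg (by omega)⟩
      have hnat : (e + 1) * n₃ = k₂ * n₁ + 0 * n₂ := by
        have : ((e + 1) * n₃ : ℤ) = ((k₂ * n₁ + 0 * n₂ : ℕ) : ℤ) := by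
          push_cast [hk₂]; linear_combination key
        exact_mod_cast this
      have := hmin3 (e + 1) (by omega) (by rw [hnat]; exact mem_genBy_pair n₁ n₂ k₂ 0)
      omega
    · exact hmm
    · exfalso
      obtain ⟨e, rfl⟩ : ∃ e, mu = mu' + (e + 1) := ⟨mu - mu' - 1, by omega⟩
      push_cast at hk hm
      have key : ((e : ℤ) + 1) * n₃ = k * n₁ := by linear_combination hk
      have hkpos : (0:ℤ) ≤ k := by
        by_contra hge
        push_neg at hge
        have h1' : k * n₁ < 0 := mul_neg_of_neg_of_pos hge hn₁'
        have h2' : (0:ℤ) < ((e:ℤ) + 1) * n₃ := by positivity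
        linarith
      obtain ⟨k₂, hk₂⟩ : ∃ k₂ : ℕ, (k₂ : ℤ) = k := ⟨k.toNat, Int.toNat_of_nonneg hkpos⟩
      have hnat : (e + 1) * n₃ = k₂ * n₁ + 0 * n₂ := by
        have : ((e + 1) * n₃ : ℤ) = ((k₂ * n₁ + 0 * n₂ : ℕ) : ℤ) := by
          push_cast [hk₂]; linear_combination key
        exact_mod_cast this
      have := hmin3 (e + 1) (by omega) (by rw [hnat]; exact mem_genBy_pair n₁ n₂ k₂ 0)
      omega
  · exfalso
    have hx' : (0:ℤ) < x := by exact_mod_cast hx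
    rcases le_or_gt mu' mu with hmm | hmm
    · -- mu = mu' + y with y ≥ 0
      obtain ⟨y, rfl⟩ : ∃ y, mu = mu' + y := ⟨mu - mu', by omega⟩
      push_cast at hk hm hRl
      have key : (x : ℤ) * n₂ + y * n₃ = k * n₁ := by linear_combination hk
      have hy' : (0:ℤ) ≤ (y:ℤ) := by positivity
      have hkpos : (0:ℤ) < k := by
        by_contra hge
        push_neg at hge
        have h1' : k * n₁ ≤ 0 := mul_nonpos_of_nonpos_of_nonneg hge hn₁'.le
        have h2' : (0:ℤ) < (x:ℤ) * n₂ := mul_pos hx' hn₂'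
        have h3' : (0:ℤ) ≤ (y:ℤ) * n₃ := mul_nonneg hy' hn₃'.le
        linarith
      obtain ⟨k₂, hk₂⟩ : ∃ k₂ : ℕ, (k₂ : ℤ) = k := ⟨k.toNat, Int.toNat_of_nonneg hkpos.le⟩
      have hnat : k₂ * n₁ = x * n₂ + y * n₃ := by
        have : ((k₂ * n₁ : ℕ) : ℤ) = ((x * n₂ + y * n₃ : ℕ) : ℤ) := by
          push_cast [hk₂]; linear_combination -key
        exact_mod_cast this
      have hc₁ : a₁ + b₁ ≤ k₂ :=
        hmin1 k₂ (by omega) (by rw [hnat]; exact mem_genBy_pair n₂ n₃ x y)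
      obtain ⟨d, hd⟩ : ∃ d, k₂ = (a₁ + b₁) + d := ⟨k₂ - (a₁ + b₁), by omega⟩
      have h1' : ((a₁:ℤ) + b₁) * n₁ = b₂ * n₂ + a₃ * n₃ := by exact_mod_cast h1
      have hnatz : ((a₁:ℤ) + b₁ + d) * n₁ = x * n₂ + y * n₃ := by
        have := hnat
        rw [hd] at this
        exact_mod_cast this
      have key2 : (x:ℤ) * n₂ + y * n₃ = b₂ * n₂ + a₃ * n₃ + d * n₁ := by
        linear_combination h1' - hnatz
      rcases lt_or_ge (mu' + y) a₃ with hsub | hsub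
      · -- y < a₃
        obtain ⟨e, he⟩ : ∃ e, a₃ = y + (e + 1) := ⟨a₃ - y - 1, by omega⟩
        have hez : (a₃ : ℤ) = y + (e + 1) := by exact_mod_cast he
        have key3 : (x:ℤ) * n₂ = b₂ * n₂ + (e + 1) * n₃ + d * n₁ := by
          linear_combination key2 + (n₃:ℤ) * hez
        have hxb : b₂ < x := by
          have t1 : (0:ℤ) < ((e:ℤ) + 1) * n₃ := mul_pos (by positivity) hn₃'
          have t2 : (0:ℤ) ≤ (d:ℤ) * n₁ := mul_nonneg (by positivity) hn₁'.le
          have hmul : (b₂:ℤ) * n₂ < (x:ℤ) * n₂ := by linarith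
          have : (b₂:ℤ) < x := lt_of_mul_lt_mul_right hmul hn₂'.le
          exact_mod_cast this
        obtain ⟨g, hg⟩ : ∃ g, x = b₂ + (g + 1) := ⟨x - b₂ - 1, by omega⟩
        have hgz : (x : ℤ) = b₂ + (g + 1) := by exact_mod_cast hg
        have hnat2 : (g + 1) * n₂ = d * n₁ + (e + 1) * n₃ := by
          have : (((g + 1) * n₂ : ℕ) : ℤ) = ((d * n₁ + (e + 1) * n₃ : ℕ) : ℤ) := by
            push_cast
            linear_combination key3 - (n₂:ℤ) * hgz
          exact_mod_cast this
        have := hmin2 (g + 1) (by omega)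
          (by rw [hnat2]; exact mem_genBy_pair n₁ n₃ d (e + 1))
        omega
      · -- a₃ ≤ mu : lam < b₂
        have hlb : lam' + x < b₂ := hRl (by exact_mod_cast hsub)
        obtain ⟨g, hg⟩ : ∃ g, b₂ = x + (g + 1) := ⟨b₂ - x - 1, by omega⟩
        have hgz : (b₂ : ℤ) = x + (g + 1) := by exact_mod_cast hg
        have key3 : (y:ℤ) * n₃ = (g + 1) * n₂ + a₃ * n₃ + d * n₁ := by
          linear_combination key2 + (n₂:ℤ) * hgz
        have hay : a₃ < y := by
          have t1 : (0:ℤ) < ((g:ℤ) + 1) * n₂ := mul_pos (by positivity) hn₂'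
          have t2 : (0:ℤ) ≤ (d:ℤ) * n₁ := mul_nonneg (by positivity) hn₁'.le
          have hmul : (a₃:ℤ) * n₃ < (y:ℤ) * n₃ := by linarith
          have : (a₃:ℤ) < y := lt_of_mul_lt_mul_right hmul hn₃'.le
          exact_mod_cast this
        obtain ⟨e, he⟩ : ∃ e, y = a₃ + (e + 1) := ⟨y - a₃ - 1, by omega⟩
        have hez : (y : ℤ) = a₃ + (e + 1) := by exact_mod_cast he
        have hnat2 : (e + 1) * n₃ = d * n₁ + (g + 1) * n₂ := by
          have : (((e + 1) * n₃ : ℕ) : ℤ) = ((d * n₁ + (g + 1) * n₂ : ℕ) : ℤ) := by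
            push_cast
            linear_combination key3 - (n₃:ℤ) * hez
          exact_mod_cast this
        have := hmin3 (e + 1) (by omega)
          (by rw [hnat2]; exact mem_genBy_pair n₁ n₂ d (g + 1))
        omega
    · -- mu < mu'
      obtain ⟨e, rfl⟩ : ∃ e, mu' = mu + (e + 1) := ⟨mu' - mu - 1, by omega⟩
      push_cast at hk hm'
      have key : (x:ℤ) * n₂ = ((e:ℤ) + 1) * n₃ + k * n₁ := by linear_combination hk
      rcases le_or_gt 0 k with hkpos | hkneg
      · obtain ⟨k₂, hk₂⟩ : ∃ k₂ : ℕ, (k₂ : ℤ) = k := ⟨k.toNat, Int.toNat_of_nonneg hkpos⟩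
        have hnat : x * n₂ = k₂ * n₁ + (e + 1) * n₃ := by
          have : ((x * n₂ : ℕ) : ℤ) = ((k₂ * n₁ + (e + 1) * n₃ : ℕ) : ℤ) := by
            push_cast [hk₂]; linear_combination key
          exact_mod_cast this
        have := hmin2 x (by omega) (by rw [hnat]; exact mem_genBy_pair n₁ n₃ k₂ (e + 1))
        omega
      · obtain ⟨k₂, hk₂⟩ : ∃ k₂ : ℕ, (k₂ : ℤ) = -k := ⟨(-k).toNat, Int.toNat_of_nonneg (by omega)⟩
        have hnat : (e + 1) * n₃ = k₂ * n₁ + x * n₂ := by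
          have : (((e + 1) * n₃ : ℕ) : ℤ) = ((k₂ * n₁ + x * n₂ : ℕ) : ℤ) := by
            push_cast [hk₂]; linear_combination -key
          exact_mod_cast this
        have := hmin3 (e + 1) (by omega) (by rw [hnat]; exact mem_genBy_pair n₁ n₂ k₂ x)
        omega

end Aux

/-- structure constants of a non-symmetric 3-generated numerical
semigroup recover the generators. -/
theorem stmt_7 (H : Set ℕ) (n₁ n₂ n₃ : ℕ)
    (hgen : H = genBy {n₁, n₂, n₃}) (hnum : IsNumSgp H)
    (hmin : ∀ x y : ℕ, H ≠ genBy {x, y})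
    (hns : ¬ IsSymmetric H)
    (a₁ a₂ a₃ b₁ b₂ b₃ : ℕ)
    (ha₁ : 0 < a₁) (ha₂ : 0 < a₂) (ha₃ : 0 < a₃)
    (hb₁ : 0 < b₁) (hb₂ : 0 < b₂) (hb₃ : 0 < b₃)
    (h1 : (a₁ + b₁) * n₁ = b₂ * n₂ + a₃ * n₃)
    (h2 : (a₂ + b₂) * n₂ = a₁ * n₁ + b₃ * n₃)
    (h3 : (a₃ + b₃) * n₃ = b₁ * n₁ + a₂ * n₂)
    (hmin1 : ∀ c : ℕ, 0 < c → c * n₁ ∈ genBy {n₂, n₃} → a₁ + b₁ ≤ c)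
    (hmin2 : ∀ c : ℕ, 0 < c → c * n₂ ∈ genBy {n₁, n₃} → a₂ + b₂ ≤ c)
    (hmin3 : ∀ c : ℕ, 0 < c → c * n₃ ∈ genBy {n₁, n₂} → a₃ + b₃ ≤ c) :
    n₁ = a₂ * a₃ + b₂ * a₃ + b₂ * b₃ ∧
    n₂ = a₁ * a₃ + a₁ * b₃ + b₁ * b₃ ∧
    n₃ = a₁ * a₂ + b₁ * a₂ + b₁ * b₂ := by
  classical
  -- positivity of the generators
  have hn₁ : 0 < n₁ := by
    rcases Nat.eq_zero_or_pos n₁ with h | h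
    · exfalso
      apply hmin n₂ n₃
      rw [hgen, h]
      exact genBy_insert_zero {n₂, n₃}
    · exact h
  have hn₂ : 0 < n₂ := by
    rcases Nat.eq_zero_or_pos n₂ with h | h
    · exfalso
      apply hmin n₁ n₃
      rw [hgen, h]
      have hset : ({n₁, 0, n₃} : Set ℕ) = insert 0 {n₁, n₃} := by
        ext t; simp; tauto
      rw [hset]
      exact genBy_insert_zero {n₁, n₃}
    · exact h
  have hn₃ : 0 < n₃ := by
    rcases Nat.eq_zero_or_pos n₃ with h | h
    · exfalso
      apply hmin n₁ n₂
      rw [hgen, h]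
      have hset : ({n₁, n₂, 0} : Set ℕ) = insert 0 {n₁, n₂} := by
        ext t; simp; tauto
      rw [hset]
      exact genBy_insert_zero {n₁, n₂}
    · exact h
  haveI : NeZero n₁ := ⟨hn₁.ne'⟩
  -- all large numbers lie in H
  obtain ⟨B, hB⟩ : ∃ B : ℕ, ∀ m : ℕ, B ≤ m → m ∈ H := by
    obtain ⟨B, hB⟩ := Set.Finite.bddAbove hnum.2.2
    refine ⟨B + 1, fun m hm => ?_⟩
    by_contra hmem
    have : m ≤ B := hB (by simpa using hmem)
    omega
  -- the staircase region
  set T : Finset (ℕ × ℕ) :=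
    (Finset.range (a₂ + b₂) ×ˢ Finset.range a₃) ∪
      (Finset.range b₂ ×ˢ Finset.Ico a₃ (a₃ + b₃)) with hTdef
  have hmemT : ∀ p : ℕ × ℕ, p ∈ T ↔
      ((p.1 < a₂ + b₂ ∧ p.2 < a₃) ∨ (p.1 < b₂ ∧ a₃ ≤ p.2 ∧ p.2 < a₃ + b₃)) := by
    intro p
    simp only [hTdef, Finset.mem_union, Finset.mem_product, Finset.mem_range,
      Finset.mem_Ico]
  set f : ℕ × ℕ → ZMod n₁ := fun p => ((p.1 * n₂ + p.2 * n₃ : ℕ) : ZMod n₁) with hfdef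
  -- injectivity of f on T
  have hinj : ∀ p ∈ T, ∀ q ∈ T, f p = f q → p = q := by
    intro p hp q hq hfq
    have hbp := (hmemT p).mp hp
    have hbq := (hmemT q).mp hq
    have hmod : (p.1 * n₂ + p.2 * n₃) ≡ (q.1 * n₂ + q.2 * n₃) [MOD n₁] :=
      (ZMod.natCast_eq_natCast_iff _ _ _).mp hfq
    obtain ⟨k, hk⟩ := hmod.dvd
    rcases le_total q.1 p.1 with hcmp | hcmp
    · have hk' : (p.1 : ℤ) * n₂ + p.2 * n₃ = q.1 * n₂ + q.2 * n₃ + (-k) * n₁ := by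
        push_cast at hk ⊢
        linarith
      obtain ⟨e1, e2⟩ := inj_aux n₁ n₂ n₃ a₁ a₂ a₃ b₁ b₂ b₃ hn₁ hn₂ hn₃ h1
        hmin1 hmin2 hmin3 p.1 p.2 q.1 q.2
        (by omega) (by omega) (by omega) (by omega) (by omega) hcmp (-k) hk'
      exact Prod.ext e1 e2
    · have hk' : (q.1 : ℤ) * n₂ + q.2 * n₃ = p.1 * n₂ + p.2 * n₃ + k * n₁ := by
        push_cast at hk ⊢
        linarith
      obtain ⟨e1, e2⟩ := inj_aux n₁ n₂ n₃ a₁ a₂ a₃ b₁ b₂ b₃ hn₁ hn₂ hn₃ h1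
        hmin1 hmin2 hmin3 q.1 q.2 p.1 p.2
        (by omega) (by omega) (by omega) (by omega) (by omega) hcmp k hk'
      exact (Prod.ext e1 e2).symm
  -- surjectivity of f from T onto ZMod n₁
  have hsurj : Set.SurjOn f ↑T ↑(Finset.univ : Finset (ZMod n₁)) := by
    intro r _
    set m : ℕ := (ZMod.val r) + (B + 1) * n₁ with hmdef
    have hBm : B ≤ m := by
      have h1' : B + 1 ≤ (B + 1) * n₁ := Nat.le_mul_of_pos_right (B + 1) hn₁
      have h2' : (B + 1) * n₁ ≤ m := Nat.le_add_left _ _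
      omega
    have hmH : m ∈ H := hB m hBm
    rw [hgen] at hmH
    obtain ⟨α, β, γ, hmeq⟩ := genBy_triple_elim hmH
    obtain ⟨lam, mu, hR, hcong⟩ := reduce_aux n₁ n₂ n₃ a₁ a₂ a₃ b₁ b₂ b₃
      hn₁ ha₁ hb₁ h1 h2 h3 (β * n₂ + γ * n₃) β γ rfl
    refine ⟨(lam, mu), ?_, ?_⟩
    · rw [Finset.mem_coe, hmemT]; exact hR
    · have hmodm : (lam * n₂ + mu * n₃) ≡ ZMod.val r [MOD n₁] := by
        have step1 : (β * n₂ + γ * n₃) ≡ m [MOD n₁] := by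
          rw [hmeq, show α * n₁ + β * n₂ + γ * n₃ = (β * n₂ + γ * n₃) + α * n₁ by ring]
          exact modeq_add_mul _ _ _
        have step2 : (ZMod.val r) ≡ m [MOD n₁] := by
          rw [hmdef]
          exact modeq_add_mul _ _ _
        exact (hcong.trans step1).trans step2.symm
      show f (lam, mu) = r
      have : ((lam * n₂ + mu * n₃ : ℕ) : ZMod n₁) = ((ZMod.val r : ℕ) : ZMod n₁) :=
        (ZMod.natCast_eq_natCast_iff _ _ _).mpr hmodm
      simp only [hfdef]
      rw [this]
      exact ZMod.natCast_rightInverse r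
  -- cardinality computations
  have hTcard : T.card = (a₂ + b₂) * a₃ + b₂ * b₃ := by
    have hdisj : Disjoint (Finset.range (a₂ + b₂) ×ˢ Finset.range a₃)
        (Finset.range b₂ ×ˢ Finset.Ico a₃ (a₃ + b₃)) := by
      rw [Finset.disjoint_left]
      intro p hp hq
      simp only [Finset.mem_product, Finset.mem_range, Finset.mem_Ico] at hp hq
      omega
    rw [hTdef, Finset.card_union_of_disjoint hdisj, Finset.card_product,
      Finset.card_product, Finset.card_range, Finset.card_range, Finset.card_range,
      Nat.card_Ico]
    have hb : a₃ + b₃ - a₃ = b₃ := by omega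
    rw [hb]
  have hcard1 : T.card ≤ n₁ := by
    have := Finset.card_le_card_of_injOn f
      (fun p _ => Finset.mem_univ (f p))
      (fun p hp q hq h => hinj p (by simpa using hp) q (by simpa using hq) h)
    simpa [Finset.card_univ, ZMod.card] using this
  have hcard2 : n₁ ≤ T.card := by
    have := Finset.card_le_card_of_surjOn f hsurj
    simpa [Finset.card_univ, ZMod.card] using this
  have hn1eq : n₁ = a₂ * a₃ + b₂ * a₃ + b₂ * b₃ := by
    have : n₁ = T.card := le_antisymm hcard2 hcard1
    rw [this, hTcard]; ring
  -- deduce n₂ and n₃ by linear algebra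
  have h2' : ((a₂:ℤ) + b₂) * n₂ = a₁ * n₁ + b₃ * n₃ := by exact_mod_cast h2
  have h3' : ((a₃:ℤ) + b₃) * n₃ = b₁ * n₁ + a₂ * n₂ := by exact_mod_cast h3
  have e2 : (a₂ * a₃ + b₂ * a₃ + b₂ * b₃) * n₂ = (a₁ * a₃ + a₁ * b₃ + b₁ * b₃) * n₁ := by
    have : ((a₂ * a₃ + b₂ * a₃ + b₂ * b₃ : ℕ) : ℤ) * n₂
        = ((a₁ * a₃ + a₁ * b₃ + b₁ * b₃ : ℕ) : ℤ) * n₁ := by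
      push_cast
      linear_combination ((a₃:ℤ) + b₃) * h2' + (b₃:ℤ) * h3'
    exact_mod_cast this
  have e3 : (a₂ * a₃ + b₂ * a₃ + b₂ * b₃) * n₃ = (a₁ * a₂ + b₁ * a₂ + b₁ * b₂) * n₁ := by
    have : ((a₂ * a₃ + b₂ * a₃ + b₂ * b₃ : ℕ) : ℤ) * n₃
        = ((a₁ * a₂ + b₁ * a₂ + b₁ * b₂ : ℕ) : ℤ) * n₁ := by
      push_cast
      linear_combination (a₂:ℤ) * h2' + ((a₂:ℤ) + b₂) * h3'
    exact_mod_cast this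
  refine ⟨hn1eq, ?_, ?_⟩
  · have h := e2
    rw [← hn1eq] at h
    exact Nat.eq_of_mul_eq_mul_left hn₁ (h.trans (mul_comm _ _))
  · have h := e3
    rw [← hn1eq] at h
    exact Nat.eq_of_mul_eq_mul_left hn₁ (h.trans (mul_comm _ _))
end
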